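/- arXiv:1410.6273 — 3 statements merged into one kernel-verified Lean document; each statement's English description precedes it below -/
import Mathlib

section
/- Let (J_k) be iid ℝ^m-valued random vectors with E‖J_1‖⁴ < ∞, N a Poisson process with intensity λ independent of (J_k), c ∈ ℝ^m, and L_t = ∑_{k=1}^{N(t)} J_k + c t a compound Poisson process with drift. If Δ_n ↓ 0, then Δ_n^{-1} E(L_{Δ_n} L_{Δ_n}^T ⊗ L_{Δ_n} L_{Δ_n}^T) → λ E(J_1 J_1^T ⊗ J_1 J_1^T) as n → ∞. -/
open MeasureTheory ProbabilityTheory Filter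

noncomputable def qf {m : ℕ} (a b c' d : Fin m) : (Fin m → ℝ) → ℝ :=
  fun x => x a * x c' * (x b * x d)

lemma qf_cont {m : ℕ} (a b c' d : Fin m) : Continuous (qf a b c' d) := by
  unfold qf; fun_prop

lemma qf_meas {m : ℕ} (a b c' d : Fin m) : Measurable (qf a b c' d) :=
  (qf_cont a b c' d).measurable

lemma qf_abs_le {m : ℕ} (a b c' d : Fin m) (x : Fin m → ℝ) :
    |qf a b c' d x| ≤ ‖x‖ ^ 4 := by
  have h : ∀ i : Fin m, |x i| ≤ ‖x‖ := fun i => by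
    rw [← Real.norm_eq_abs]; exact norm_le_pi_norm x i
  have h0 := norm_nonneg x
  have : |qf a b c' d x| = |x a| * |x c'| * (|x b| * |x d|) := by
    unfold qf; rw [abs_mul, abs_mul, abs_mul]
  rw [this]
  calc |x a| * |x c'| * (|x b| * |x d|) ≤ ‖x‖ * ‖x‖ * (‖x‖ * ‖x‖) := by
        gcongr <;> first | exact abs_nonneg _ | exact h _
    _ = ‖x‖ ^ 4 := by ring

lemma aux_sum_pow_four {ι : Type*} (s : Finset ι) (u : ι → ℝ) (hu : ∀ i ∈ s, 0 ≤ u i) :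
    (∑ i ∈ s, u i) ^ 4 ≤ (s.card : ℝ) ^ 3 * ∑ i ∈ s, u i ^ 4 :=
  pow_sum_le_card_mul_sum_pow hu 3

lemma aux_add_pow_four (x y : ℝ) :
    (x + y) ^ 4 ≤ 8 * (x ^ 4 + y ^ 4) := by
  nlinarith [sq_nonneg (x - y), sq_nonneg (x + y), sq_nonneg (x*y), sq_nonneg (x^2 - y^2),
    sq_nonneg (x^2 + y^2)]

lemma aux_pow16 (l : ℕ) : ((l : ℝ) + 1) ^ 4 ≤ 16 ^ l := by
  have h : (l : ℝ) + 1 ≤ 2 ^ l := by exact_mod_cast Nat.lt_two_pow_self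
  calc ((l:ℝ)+1)^4 ≤ ((2:ℝ)^l)^4 := by
        apply pow_le_pow_left₀ (by positivity) h
    _ = 16 ^ l := by rw [← pow_mul, mul_comm, pow_mul]; norm_num

lemma aux_pow16' (l : ℕ) : ((l : ℝ) + 3) ^ 4 ≤ 256 * 16 ^ l := by
  have h : (l : ℝ) + 3 ≤ 4 * 2 ^ l := by
    have h1 : (l : ℝ) + 1 ≤ 2 ^ l := by exact_mod_cast Nat.lt_two_pow_self
    nlinarith
  calc ((l:ℝ)+3)^4 ≤ (4 * (2:ℝ)^l)^4 := by
        apply pow_le_pow_left₀ (by positivity) h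
    _ = 256 * 16 ^ l := by
        rw [mul_pow, ← pow_mul, mul_comm l 4, pow_mul]; norm_num

lemma aux_summable1 (x : ℝ) (hx : 0 ≤ x) :
    Summable (fun l : ℕ => ((l:ℝ)+1)^4 * x ^ l / l.factorial) := by
  refine Summable.of_nonneg_of_le (fun l => by positivity) (fun l => ?_)
    (Real.summable_pow_div_factorial (16*x))
  calc ((l:ℝ)+1)^4 * x^l / l.factorial ≤ (16:ℝ)^l * x^l / l.factorial := by
        gcongr; exact aux_pow16 l
    _ = (16*x)^l / l.factorial := by rw [mul_pow]

lemma aux_summable3 (x : ℝ) (hx : 0 ≤ x) :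
    Summable (fun l : ℕ => ((l:ℝ)+3)^4 * x ^ l / l.factorial) := by
  refine Summable.of_nonneg_of_le (fun l => by positivity) (fun l => ?_)
    ((Real.summable_pow_div_factorial (16*x)).mul_left 256)
  calc ((l:ℝ)+3)^4 * x^l / l.factorial ≤ (256 * (16:ℝ)^l) * x^l / l.factorial := by
        gcongr; exact aux_pow16' l
    _ = 256 * ((16*x)^l / l.factorial) := by rw [mul_pow]; ring

/-- Let `(J_k)` be iid `ℝᵐ`-valued random vectors with `E‖J₁‖⁴ < ∞`, `N` a Poisson
process with intensity `lam` independent of `(J_k)`, `c ∈ ℝᵐ`, and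
`L_t = ∑_{k<N(t)} J_k + c t` a compound Poisson process with drift.  If `Δ_n ↓ 0`,
then `Δ_n⁻¹ E(L_{Δ_n} L_{Δ_n}ᵀ ⊗ L_{Δ_n} L_{Δ_n}ᵀ) → lam · E(J₁ J₁ᵀ ⊗ J₁ J₁ᵀ)`
entrywise. -/
theorem compound_poisson_fourth_moment (m : ℕ) {Ω : Type*} [MeasurableSpace Ω]
    (P : Measure Ω) [IsProbabilityMeasure P]
    (J : ℕ → Ω → Fin m → ℝ)
    (hJmeas : ∀ k, Measurable (J k))
    (hJiid : iIndepFun J P)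
    (hJident : ∀ k, P.map (J k) = P.map (J 0))
    (hJ4 : Integrable (fun ω => ‖J 0 ω‖ ^ 4) P)
    (lam : ℝ) (hlam : 0 < lam)
    (N : ℝ → Ω → ℕ)
    (hNmeas : ∀ t, Measurable (N t))
    (hPoisson : ∀ t : ℝ, 0 < t → ∀ l : ℕ,
      P {ω | N t ω = l} =
        ENNReal.ofReal (Real.exp (-(lam * t)) * (lam * t) ^ l / l.factorial))
    -- independence of the Poisson process and the jump sizes
    (hindep : Indep (⨆ t : ℝ, MeasurableSpace.comap (N t) inferInstance)
      (⨆ k : ℕ, MeasurableSpace.comap (J k) inferInstance) P)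
    (c : Fin m → ℝ)
    (L : ℝ → Ω → Fin m → ℝ)
    (hL : ∀ t ω, L t ω = (∑ k ∈ Finset.range (N t ω), J k ω) + t • c)
    (Δ : ℕ → ℝ) (hΔpos : ∀ n, 0 < Δ n) (hΔanti : Antitone Δ)
    (hΔ : Tendsto Δ atTop (nhds 0)) :
    ∀ a b c' d : Fin m,
      Tendsto (fun n => (Δ n)⁻¹ *
          ∫ ω, L (Δ n) ω a * L (Δ n) ω c' * (L (Δ n) ω b * L (Δ n) ω d) ∂P)
        atTop
        (nhds (lam * ∫ ω, J 0 ω a * J 0 ω c' * (J 0 ω b * J 0 ω d) ∂P)) := by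
  intro a b c' d
  show Tendsto (fun n => (Δ n)⁻¹ * ∫ ω, qf a b c' d (L (Δ n) ω) ∂P) atTop
    (nhds (lam * ∫ ω, qf a b c' d (J 0 ω) ∂P))
  -- basic facts
  have hΔ0 : ∀ n, Δ n ≤ Δ 0 := fun n => hΔanti (Nat.zero_le n)
  have hc4 : Continuous (fun x : Fin m → ℝ => ‖x‖ ^ 4) := continuous_norm.pow 4
  set M : ℝ := ∫ ω, ‖J 0 ω‖ ^ 4 ∂P with hM_def
  have hM0 : 0 ≤ M := integral_nonneg fun ω => by positivity
  have hnormint : ∀ k, Integrable (fun ω => ‖J k ω‖ ^ 4) P := by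
    intro k
    have h0 : Integrable (fun x : Fin m → ℝ => ‖x‖ ^ 4) (P.map (J k)) := by
      rw [hJident k, integrable_map_measure hc4.aestronglyMeasurable (hJmeas 0).aemeasurable]
      exact hJ4
    rw [integrable_map_measure hc4.aestronglyMeasurable (hJmeas k).aemeasurable] at h0
    exact h0
  have hnormeq : ∀ k, ∫ ω, ‖J k ω‖ ^ 4 ∂P = M := by
    intro k
    rw [hM_def]
    calc ∫ ω, ‖J k ω‖ ^ 4 ∂P = ∫ x, ‖x‖ ^ 4 ∂(P.map (J k)) :=
          (integral_map (hJmeas k).aemeasurable hc4.aestronglyMeasurable).symm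
      _ = ∫ x, ‖x‖ ^ 4 ∂(P.map (J 0)) := by rw [hJident k]
      _ = ∫ ω, ‖J 0 ω‖ ^ 4 ∂P := integral_map (hJmeas 0).aemeasurable hc4.aestronglyMeasurable
  set K : ℝ := M + (Δ 0) ^ 4 * ‖c‖ ^ 4 with hK_def
  have hK0 : 0 ≤ K := add_nonneg hM0 (by positivity)
  have hTmeas : ∀ l : ℕ, Measurable (fun ω => ∑ k ∈ Finset.range l, J k ω) :=
    fun l => Finset.measurable_sum _ fun k _ => hJmeas k
  have hXmeas : ∀ (t : ℝ) (l : ℕ),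
      Measurable (fun ω => (∑ k ∈ Finset.range l, J k ω) + t • c) :=
    fun t l => (hTmeas l).add_const _
  -- domination
  have hdom : ∀ (t : ℝ), 0 ≤ t → t ≤ Δ 0 → ∀ (l : ℕ) (ω : Ω),
      |qf a b c' d ((∑ k ∈ Finset.range l, J k ω) + t • c)| ≤
        8 * ((l:ℝ)^3 * (∑ k ∈ Finset.range l, ‖J k ω‖^4) + (Δ 0)^4 * ‖c‖^4) := by
    intro t ht0 htle l ω
    have hnormle : ‖(∑ k ∈ Finset.range l, J k ω) + t • c‖ ≤
        (∑ k ∈ Finset.range l, ‖J k ω‖) + t * ‖c‖ := by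
      refine (norm_add_le _ _).trans (add_le_add (norm_sum_le _ _) ?_)
      rw [norm_smul, Real.norm_eq_abs, abs_of_nonneg ht0]
    have h1 : (∑ k ∈ Finset.range l, ‖J k ω‖)^4 ≤
        (l:ℝ)^3 * ∑ k ∈ Finset.range l, ‖J k ω‖^4 := by
      simpa [Finset.card_range] using
        aux_sum_pow_four (Finset.range l) (fun k => ‖J k ω‖) (fun k _ => norm_nonneg _)
    have h2 : (t*‖c‖)^4 ≤ (Δ 0)^4*‖c‖^4 := by
      rw [mul_pow]
      exact mul_le_mul_of_nonneg_right (pow_le_pow_left₀ ht0 htle 4) (by positivity)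
    calc |qf a b c' d ((∑ k ∈ Finset.range l, J k ω) + t • c)|
        ≤ ‖(∑ k ∈ Finset.range l, J k ω) + t • c‖^4 := qf_abs_le a b c' d _
      _ ≤ ((∑ k ∈ Finset.range l, ‖J k ω‖) + t * ‖c‖)^4 :=
          pow_le_pow_left₀ (norm_nonneg _) hnormle 4
      _ ≤ 8*((∑ k ∈ Finset.range l, ‖J k ω‖)^4 + (t*‖c‖)^4) := aux_add_pow_four _ _
      _ ≤ 8 * ((l:ℝ)^3 * (∑ k ∈ Finset.range l, ‖J k ω‖^4) + (Δ 0)^4 * ‖c‖^4) := by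
          linarith
  have hDint : ∀ l : ℕ, Integrable
      (fun ω => 8 * ((l:ℝ)^3 * (∑ k ∈ Finset.range l, ‖J k ω‖^4) + (Δ 0)^4 * ‖c‖^4)) P := by
    intro l
    exact ((integrable_add_const_iff.mpr
      ((integrable_finset_sum _ fun k _ => hnormint k).const_mul _)).const_mul _)
  have hDval : ∀ l : ℕ, ∫ ω, 8 * ((l:ℝ)^3 * (∑ k ∈ Finset.range l, ‖J k ω‖^4)
      + (Δ 0)^4 * ‖c‖^4) ∂P ≤ 8 * ((l:ℝ)+1)^4 * K := by
    intro l
    have hsint : Integrable (fun ω => (l:ℝ)^3 * ∑ k ∈ Finset.range l, ‖J k ω‖^4) P :=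
      (integrable_finset_sum _ fun k _ => hnormint k).const_mul _
    have hval : ∫ ω, 8 * ((l:ℝ)^3 * (∑ k ∈ Finset.range l, ‖J k ω‖^4)
        + (Δ 0)^4 * ‖c‖^4) ∂P = 8 * ((l:ℝ)^3 * ((l:ℝ) * M) + (Δ 0)^4 * ‖c‖^4) := by
      rw [integral_const_mul, integral_add hsint (integrable_const _), integral_const_mul,
        integral_finset_sum _ (fun k _ => hnormint k)]
      simp [hnormeq, Finset.sum_const, Finset.card_range, nsmul_eq_mul, measure_univ]
    rw [hval, hK_def]
    have hl1 : (0:ℝ) ≤ (l:ℝ) := Nat.cast_nonneg l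
    have h4 : (l:ℝ)^4 ≤ ((l:ℝ)+1)^4 := pow_le_pow_left₀ hl1 (by linarith) 4
    have hone : (1:ℝ) ≤ ((l:ℝ)+1)^4 := one_le_pow₀ (by linarith)
    have e1 : (l:ℝ)^4*M ≤ ((l:ℝ)+1)^4*M := mul_le_mul_of_nonneg_right h4 hM0
    have e2 : (Δ 0)^4*‖c‖^4 ≤ ((l:ℝ)+1)^4*((Δ 0)^4*‖c‖^4) :=
      le_mul_of_one_le_left (by positivity) hone
    nlinarith [e1, e2]
  have hψint : ∀ (t : ℝ), 0 ≤ t → t ≤ Δ 0 → ∀ l : ℕ,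
      Integrable (fun ω => qf a b c' d ((∑ k ∈ Finset.range l, J k ω) + t • c)) P := by
    intro t ht0 htle l
    refine Integrable.mono' (hDint l) ((qf_meas a b c' d).comp (hXmeas t l)).aestronglyMeasurable
      (Filter.Eventually.of_forall fun ω => ?_)
    rw [Real.norm_eq_abs]
    exact hdom t ht0 htle l ω
  have habs_bound : ∀ (t : ℝ), 0 ≤ t → t ≤ Δ 0 → ∀ l : ℕ,
      ∫ ω, |qf a b c' d ((∑ k ∈ Finset.range l, J k ω) + t • c)| ∂P ≤ 8 * ((l:ℝ)+1)^4 * K := by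
    intro t ht0 htle l
    refine le_trans (integral_mono (hψint t ht0 htle l).abs (hDint l)
      (fun ω => hdom t ht0 htle l ω)) (hDval l)
  have hHb : ∀ (t : ℝ), 0 ≤ t → t ≤ Δ 0 → ∀ l : ℕ,
      |∫ ω, qf a b c' d ((∑ k ∈ Finset.range l, J k ω) + t • c) ∂P| ≤ 8 * ((l:ℝ)+1)^4 * K :=
    by
    intro t ht0 htle l
    have h := norm_integral_le_integral_norm
      (μ := P) (f := fun ω => qf a b c' d ((∑ k ∈ Finset.range l, J k ω) + t • c))
    simp only [Real.norm_eq_abs] at h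
    exact h.trans (habs_bound t ht0 htle l)
  -- independence
  have hindepF : ∀ (t : ℝ) (l : ℕ) (g : (Fin m → ℝ) → ℝ), Measurable g →
      IndepFun (Set.indicator {ω | N t ω = l} (fun _ => (1:ℝ)))
        (fun ω => g ((∑ k ∈ Finset.range l, J k ω) + t • c)) P := by
    intro t l g hg
    have hA : MeasurableSet[MeasurableSpace.comap (N t) inferInstance] {ω | N t ω = l} :=
      ⟨{l}, measurableSet_singleton l, rfl⟩
    have hφ : Measurable[MeasurableSpace.comap (N t) inferInstance]
        (Set.indicator {ω | N t ω = l} (fun _ => (1:ℝ))) :=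
      measurable_const.indicator hA
    have hJk : ∀ k, Measurable[⨆ k, MeasurableSpace.comap (J k) inferInstance] (J k) :=
      fun k => measurable_iff_comap_le.mpr
        (le_iSup (fun k => MeasurableSpace.comap (J k) inferInstance) k)
    have hψ : Measurable[⨆ k, MeasurableSpace.comap (J k) inferInstance]
        (fun ω => g ((∑ k ∈ Finset.range l, J k ω) + t • c)) :=
      hg.comp ((Finset.measurable_sum _ fun k _ => hJk k).add_const _)
    exact indep_of_indep_of_le_right
      (indep_of_indep_of_le_left hindep
        (hφ.comap_le.trans (le_iSup (fun t => MeasurableSpace.comap (N t) inferInstance) t)))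
      hψ.comap_le
  -- probability weights and summable bounds
  have hple : ∀ (t : ℝ), 0 ≤ t → t ≤ Δ 0 → ∀ l : ℕ,
      Real.exp (-(lam*t)) * (lam*t)^l / l.factorial ≤ (lam*Δ 0)^l / l.factorial := by
    intro t ht0 htle l
    have h1 : Real.exp (-(lam*t)) ≤ 1 := by
      have h := Real.exp_le_exp.mpr (show -(lam*t) ≤ 0 by nlinarith [mul_nonneg hlam.le ht0])
      simpa [Real.exp_zero] using h
    have h2 : (lam*t)^l ≤ (lam*Δ 0)^l :=
      pow_le_pow_left₀ (mul_nonneg hlam.le ht0) (by nlinarith) l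
    have h3 : Real.exp (-(lam*t)) * (lam*t)^l ≤ (lam*Δ 0)^l := by
      calc Real.exp (-(lam*t)) * (lam*t)^l ≤ 1 * (lam*Δ 0)^l :=
            mul_le_mul h1 h2 (by positivity) one_pos.le
        _ = (lam*Δ 0)^l := one_mul _
    rw [div_eq_mul_inv, div_eq_mul_inv]
    exact mul_le_mul_of_nonneg_right h3 (by positivity)
  have hBnd0 : ∀ l : ℕ, 0 ≤ ((lam*Δ 0)^l / l.factorial) * (8 * ((l:ℝ)+1)^4 * K) := by
    intro l
    have h1 : (0:ℝ) ≤ (lam*Δ 0)^l / l.factorial :=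
      div_nonneg (pow_nonneg (mul_nonneg hlam.le (hΔpos 0).le) l) (Nat.cast_nonneg _)
    have h2 : (0:ℝ) ≤ 8 * ((l:ℝ)+1)^4 * K :=
      mul_nonneg (by positivity) hK0
    exact mul_nonneg h1 h2
  have hbsum : Summable (fun l : ℕ =>
      ((lam*Δ 0)^l / l.factorial) * (8 * ((l:ℝ)+1)^4 * K)) := by
    have h := (aux_summable1 (lam*Δ 0) (mul_nonneg hlam.le (hΔpos 0).le)).mul_left (8*K)
    exact h.congr fun l => by ring
  have hp0 : ∀ (t : ℝ), 0 < t → ∀ l : ℕ,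
      0 ≤ Real.exp (-(lam * t)) * (lam * t) ^ l / l.factorial := by
    intro t ht l
    have h : 0 ≤ lam * t := le_of_lt (mul_pos hlam ht)
    positivity
  -- the key identity
  have hkey : ∀ (t : ℝ), 0 < t → t ≤ Δ 0 →
      ∫ ω, qf a b c' d (L t ω) ∂P =
        ∑' l : ℕ, (Real.exp (-(lam * t)) * (lam * t) ^ l / l.factorial) *
          ∫ ω, qf a b c' d ((∑ k ∈ Finset.range l, J k ω) + t • c) ∂P := by
    intro t ht htle
    have hPt : ∀ l : ℕ, (P {ω | N t ω = l}).toReal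
        = Real.exp (-(lam * t)) * (lam * t) ^ l / l.factorial := by
      intro l; rw [hPoisson t ht l, ENNReal.toReal_ofReal (hp0 t ht l)]
    have hAmeas : ∀ l : ℕ, MeasurableSet {ω | N t ω = l} :=
      fun l => hNmeas t (measurableSet_singleton l)
    set F : ℕ → Ω → ℝ := fun l => Set.indicator {ω' | N t ω' = l}
      (fun ω => qf a b c' d ((∑ k ∈ Finset.range l, J k ω) + t • c)) with hF_def
    have hFpt : ∀ ω, (∑' l, F l ω) = qf a b c' d (L t ω) := by
      intro ω
      have hz : ∀ l, l ≠ N t ω → F l ω = 0 := by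
        intro l hl
        have hnot : ω ∉ {ω' | N t ω' = l} := fun h => hl (Eq.symm h)
        simp only [hF_def]
        exact Set.indicator_of_notMem hnot _
      have h1 : (∑' l, F l ω) = F (N t ω) ω := tsum_eq_single (N t ω) hz
      have hmem : ω ∈ {ω' | N t ω' = N t ω} := rfl
      rw [h1, hL t ω]
      simp only [hF_def]
      exact Set.indicator_of_mem hmem _
    have hFint : ∀ l, Integrable (F l) P :=
      fun l => ((hψint t ht.le htle l).indicator (hAmeas l))
    have hφaesm : ∀ l, AEStronglyMeasurable
        (Set.indicator {ω' | N t ω' = l} (fun _ => (1:ℝ))) P :=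
      fun l => (measurable_const.indicator (hAmeas l)).aestronglyMeasurable
    have hφint : ∀ l, ∫ ω, Set.indicator {ω' | N t ω' = l} (fun _ => (1:ℝ)) ω ∂P
        = Real.exp (-(lam * t)) * (lam * t) ^ l / l.factorial := by
      intro l
      rw [← hPt l]
      exact (integral_indicator_one (hAmeas l)).trans (measureReal_def _ _)
    have hFval : ∀ l, ∫ ω, F l ω ∂P =
        (Real.exp (-(lam * t)) * (lam * t) ^ l / l.factorial) *
        ∫ ω, qf a b c' d ((∑ k ∈ Finset.range l, J k ω) + t • c) ∂P := by
      intro l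
      have hFmul : ∀ ω : Ω, F l ω = Set.indicator {ω' | N t ω' = l} (fun _ => (1:ℝ)) ω *
          qf a b c' d ((∑ k ∈ Finset.range l, J k ω) + t • c) := by
        intro ω
        by_cases h : ω ∈ {ω' | N t ω' = l} <;>
          simp [hF_def, Set.indicator_of_mem, Set.indicator_of_notMem, h]
      calc ∫ ω, F l ω ∂P
          = ∫ ω, Set.indicator {ω' | N t ω' = l} (fun _ => (1:ℝ)) ω *
              qf a b c' d ((∑ k ∈ Finset.range l, J k ω) + t • c) ∂P :=
            integral_congr_ae (.of_forall fun ω => hFmul ω)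
        _ = (∫ ω, Set.indicator {ω' | N t ω' = l} (fun _ => (1:ℝ)) ω ∂P) *
            ∫ ω, qf a b c' d ((∑ k ∈ Finset.range l, J k ω) + t • c) ∂P :=
            (hindepF t l _ (qf_meas a b c' d)).integral_mul_eq_mul_integral (hφaesm l)
              ((qf_meas a b c' d).comp (hXmeas t l)).aestronglyMeasurable
        _ = _ := by rw [hφint l]
    have hFabs : ∀ l, ∫ ω, ‖F l ω‖ ∂P ≤
        (Real.exp (-(lam * t)) * (lam * t) ^ l / l.factorial) * (8 * ((l:ℝ)+1)^4 * K) := by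
      intro l
      have habs : ∀ ω, ‖F l ω‖ = Set.indicator {ω' | N t ω' = l} (fun _ => (1:ℝ)) ω *
          |qf a b c' d ((∑ k ∈ Finset.range l, J k ω) + t • c)| := by
        intro ω
        by_cases h : ω ∈ {ω' | N t ω' = l} <;>
          simp [hF_def, Set.indicator_of_mem, Set.indicator_of_notMem, h, Real.norm_eq_abs]
      have step : ∫ ω, ‖F l ω‖ ∂P =
          (∫ ω, Set.indicator {ω' | N t ω' = l} (fun _ => (1:ℝ)) ω ∂P) *
          ∫ ω, |qf a b c' d ((∑ k ∈ Finset.range l, J k ω) + t • c)| ∂P := by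
        rw [integral_congr_ae (.of_forall habs)]
        exact (hindepF t l _ (qf_meas a b c' d).abs).integral_mul_eq_mul_integral (hφaesm l)
          (((qf_meas a b c' d).comp (hXmeas t l)).abs).aestronglyMeasurable
      rw [step, hφint l]
      exact mul_le_mul_of_nonneg_left (habs_bound t ht.le htle l) (hp0 t ht l)
    have hlint : (∑' l, ∫⁻ ω, ‖F l ω‖₊ ∂P) ≠ ⊤ := by
      have hb : ∀ l, (∫⁻ ω, ‖F l ω‖₊ ∂P) ≤
          ENNReal.ofReal (((lam*Δ 0)^l / l.factorial) * (8 * ((l:ℝ)+1)^4 * K)) := by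
        intro l
        change (∫⁻ ω, ‖F l ω‖ₑ ∂P) ≤ _
        rw [← ofReal_integral_norm_eq_lintegral_enorm (hFint l)]
        refine ENNReal.ofReal_le_ofReal ((hFabs l).trans ?_)
        exact mul_le_mul_of_nonneg_right (hple t ht.le htle l)
          (mul_nonneg (by positivity) hK0)
      refine ne_top_of_le_ne_top ?_ (ENNReal.tsum_le_tsum hb)
      rw [← ENNReal.ofReal_tsum_of_nonneg hBnd0 hbsum]
      exact ENNReal.ofReal_ne_top
    calc ∫ ω, qf a b c' d (L t ω) ∂P = ∫ ω, ∑' l, F l ω ∂P :=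
          integral_congr_ae (.of_forall fun ω => (hFpt ω).symm)
      _ = ∑' l, ∫ ω, F l ω ∂P :=
          integral_tsum (fun l => (hFint l).aestronglyMeasurable) hlint
      _ = _ := tsum_congr hFval
  -- limit of the first-order term via dominated convergence
  have hexp : Tendsto (fun n => Real.exp (-(lam * Δ n))) atTop (nhds 1) := by
    have h1 : Tendsto (fun n => -(lam * Δ n)) atTop (nhds 0) := by
      have h := (hΔ.const_mul lam).neg
      simpa using h
    have h2 := (Real.continuous_exp.tendsto 0).comp h1
    simpa [Function.comp_def] using h2
  have hH1 : Tendsto (fun n => ∫ ω, qf a b c' d (J 0 ω + Δ n • c) ∂P) atTop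
      (nhds (∫ ω, qf a b c' d (J 0 ω) ∂P)) := by
    refine tendsto_integral_of_dominated_convergence
      (fun ω => 8 * (‖J 0 ω‖^4 + (Δ 0)^4 * ‖c‖^4))
      (fun n => ((qf_meas a b c' d).comp ((hJmeas 0).add_const _)).aestronglyMeasurable)
      ((integrable_add_const_iff.mpr hJ4).const_mul 8) ?_ ?_
    · intro n
      refine Filter.Eventually.of_forall fun ω => ?_
      rw [Real.norm_eq_abs]
      have h1 : ‖J 0 ω + Δ n • c‖ ≤ ‖J 0 ω‖ + Δ n * ‖c‖ := by
        refine (norm_add_le _ _).trans ?_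
        rw [norm_smul, Real.norm_eq_abs, abs_of_nonneg (hΔpos n).le]
      have h2 : (Δ n * ‖c‖)^4 ≤ (Δ 0)^4*‖c‖^4 := by
        rw [mul_pow]
        exact mul_le_mul_of_nonneg_right (pow_le_pow_left₀ (hΔpos n).le (hΔ0 n) 4)
          (by positivity)
      calc |qf a b c' d (J 0 ω + Δ n • c)| ≤ ‖J 0 ω + Δ n • c‖^4 := qf_abs_le a b c' d _
        _ ≤ (‖J 0 ω‖ + Δ n * ‖c‖)^4 := pow_le_pow_left₀ (norm_nonneg _) h1 4
        _ ≤ 8*(‖J 0 ω‖^4 + (Δ n * ‖c‖)^4) := aux_add_pow_four _ _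
        _ ≤ 8 * (‖J 0 ω‖^4 + (Δ 0)^4 * ‖c‖^4) := by linarith
    · refine Filter.Eventually.of_forall fun ω => ?_
      have hcont : Continuous (fun s : ℝ => qf a b c' d (J 0 ω + s • c)) :=
        (qf_cont a b c' d).comp (continuous_const.add (continuous_id.smul continuous_const))
      have h := (hcont.tendsto 0).comp hΔ
      simpa [Function.comp_def] using h
  -- term 0
  have hE1 : Tendsto (fun n => (Δ n)⁻¹ *
      ((Real.exp (-(lam * Δ n)) * (lam * Δ n) ^ 0 / (Nat.factorial 0 : ℝ)) *
        ∫ ω, qf a b c' d ((∑ k ∈ Finset.range 0, J k ω) + Δ n • c) ∂P)) atTop (nhds 0) := by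
    have hQc : ∀ n, ∫ ω, qf a b c' d ((∑ k ∈ Finset.range 0, J k ω) + Δ n • c) ∂P
        = (Δ n)^4 * qf a b c' d c := by
      intro n
      have hpt : ∀ ω : Ω, qf a b c' d ((∑ k ∈ Finset.range 0, J k ω) + Δ n • c)
          = (Δ n)^4 * qf a b c' d c := by
        intro ω
        simp only [Finset.range_zero, Finset.sum_empty, zero_add, qf, Pi.smul_apply,
          smul_eq_mul]
        ring
      rw [integral_congr_ae (.of_forall hpt)]
      simp [measure_univ]
    have heq : ∀ n, (Δ n)⁻¹ *
        ((Real.exp (-(lam * Δ n)) * (lam * Δ n) ^ 0 / (Nat.factorial 0 : ℝ)) *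
          ((Δ n)^4 * qf a b c' d c))
        = Real.exp (-(lam * Δ n)) * ((Δ n)^3 * qf a b c' d c) := by
      intro n
      have hne : Δ n ≠ 0 := (hΔpos n).ne'
      field_simp
      ring
    have h3 : Tendsto (fun n => (Δ n)^3) atTop (nhds 0) := by
      have := hΔ.pow 3
      simpa using this
    have hlim : Tendsto (fun n => Real.exp (-(lam * Δ n)) * ((Δ n)^3 * qf a b c' d c))
        atTop (nhds 0) := by
      have := hexp.mul (h3.mul_const (qf a b c' d c))
      simpa using this
    refine hlim.congr fun n => ?_
    rw [hQc n]
    exact (heq n).symm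
  -- term 1
  have hE2 : Tendsto (fun n => (Δ n)⁻¹ *
      ((Real.exp (-(lam * Δ n)) * (lam * Δ n) ^ 1 / (Nat.factorial 1 : ℝ)) *
        ∫ ω, qf a b c' d ((∑ k ∈ Finset.range 1, J k ω) + Δ n • c) ∂P)) atTop
      (nhds (lam * ∫ ω, qf a b c' d (J 0 ω) ∂P)) := by
    have hsum1 : ∀ n, ∫ ω, qf a b c' d ((∑ k ∈ Finset.range 1, J k ω) + Δ n • c) ∂P
        = ∫ ω, qf a b c' d (J 0 ω + Δ n • c) ∂P := by
      intro n
      refine integral_congr_ae (.of_forall fun ω => ?_)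
      simp [Finset.sum_range_one]
    have heq : ∀ n, (Δ n)⁻¹ *
        ((Real.exp (-(lam * Δ n)) * (lam * Δ n) ^ 1 / (Nat.factorial 1 : ℝ)) *
          ∫ ω, qf a b c' d (J 0 ω + Δ n • c) ∂P)
        = (Real.exp (-(lam * Δ n)) * lam) * ∫ ω, qf a b c' d (J 0 ω + Δ n • c) ∂P := by
      intro n
      have hne : Δ n ≠ 0 := (hΔpos n).ne'
      field_simp
      ring
    have hlim : Tendsto (fun n => (Real.exp (-(lam * Δ n)) * lam) *
        ∫ ω, qf a b c' d (J 0 ω + Δ n • c) ∂P) atTop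
        (nhds ((1 * lam) * ∫ ω, qf a b c' d (J 0 ω) ∂P)) :=
      (hexp.mul_const lam).mul hH1
    rw [one_mul] at hlim
    refine hlim.congr fun n => ?_
    rw [hsum1 n]
    exact (heq n).symm
  -- tail
  have hy : (0:ℝ) ≤ lam * Δ 0 := mul_nonneg hlam.le (hΔpos 0).le
  have hgsum : Summable (fun l : ℕ => ((l:ℝ)+3)^4 * (lam*Δ 0)^l / l.factorial) :=
    aux_summable3 (lam*Δ 0) hy
  have hterm : ∀ (n : ℕ) (l : ℕ),
      |(Real.exp (-(lam * Δ n)) * (lam * Δ n) ^ (l+2) / ((l+2).factorial : ℝ)) *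
        ∫ ω, qf a b c' d ((∑ k ∈ Finset.range (l+2), J k ω) + Δ n • c) ∂P|
      ≤ ((Δ n)^2 * (lam^2 * (8*K))) * (((l:ℝ)+3)^4 * (lam*Δ 0)^l / l.factorial) := by
    intro n l
    have ht0 : 0 ≤ Δ n := (hΔpos n).le
    have hx : 0 ≤ lam * Δ n := mul_nonneg hlam.le ht0
    have h1exp : Real.exp (-(lam * Δ n)) ≤ 1 := by
      have h := Real.exp_le_exp.mpr (show -(lam * Δ n) ≤ 0 by nlinarith)
      simpa using h
    have h2 : (lam * Δ n)^l ≤ (lam * Δ 0)^l :=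
      pow_le_pow_left₀ hx (by nlinarith [hΔ0 n]) l
    have h3 : (l.factorial : ℝ) ≤ ((l+2).factorial : ℝ) := by
      exact_mod_cast Nat.factorial_le (by omega : l ≤ l + 2)
    have h4 : (0:ℝ) < l.factorial := by exact_mod_cast l.factorial_pos
    have key : Real.exp (-(lam * Δ n)) * (lam * Δ n)^(l+2) / ((l+2).factorial : ℝ)
        ≤ (lam * Δ n)^2 * ((lam * Δ 0)^l / l.factorial) := by
      have hA : Real.exp (-(lam * Δ n)) * (lam * Δ n)^(l+2)
          ≤ (lam * Δ n)^2 * (lam * Δ 0)^l := by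
        have e1 : (lam * Δ n)^(l+2) = (lam * Δ n)^l * (lam * Δ n)^2 := by
          rw [← pow_add]
        calc Real.exp (-(lam * Δ n)) * (lam * Δ n)^(l+2)
            ≤ (lam * Δ n)^(l+2) := mul_le_of_le_one_left (pow_nonneg hx _) h1exp
          _ = (lam * Δ n)^l * (lam * Δ n)^2 := e1
          _ ≤ (lam * Δ 0)^l * (lam * Δ n)^2 :=
              mul_le_mul_of_nonneg_right h2 (pow_nonneg hx 2)
          _ = (lam * Δ n)^2 * (lam * Δ 0)^l := by ring
      have h2' : (1:ℝ)/((l+2).factorial : ℝ) ≤ 1/(l.factorial : ℝ) :=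
        one_div_le_one_div_of_le h4 h3
      calc Real.exp (-(lam * Δ n)) * (lam * Δ n)^(l+2) / ((l+2).factorial : ℝ)
          = (Real.exp (-(lam * Δ n)) * (lam * Δ n)^(l+2)) * (1/((l+2).factorial : ℝ)) := by
            ring
        _ ≤ ((lam * Δ n)^2 * (lam * Δ 0)^l) * (1/(l.factorial : ℝ)) :=
            mul_le_mul hA h2' (by positivity)
              (mul_nonneg (pow_nonneg hx 2) (pow_nonneg hy l))
        _ = (lam * Δ n)^2 * ((lam * Δ 0)^l / l.factorial) := by ring
    have hH := hHb (Δ n) ht0 (hΔ0 n) (l+2)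
    have hH' : |∫ ω, qf a b c' d ((∑ k ∈ Finset.range (l+2), J k ω) + Δ n • c) ∂P|
        ≤ 8 * ((l:ℝ)+3)^4 * K := by
      have hc : ((l+2:ℕ):ℝ) + 1 = (l:ℝ)+3 := by push_cast; ring
      rw [← hc]
      exact hH
    rw [abs_mul, abs_of_nonneg (hp0 (Δ n) (hΔpos n) (l+2))]
    calc Real.exp (-(lam * Δ n)) * (lam * Δ n) ^ (l+2) / ((l+2).factorial : ℝ) *
          |∫ ω, qf a b c' d ((∑ k ∈ Finset.range (l+2), J k ω) + Δ n • c) ∂P|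
        ≤ ((lam * Δ n)^2 * ((lam * Δ 0)^l / l.factorial)) * (8 * ((l:ℝ)+3)^4 * K) :=
          mul_le_mul key hH' (abs_nonneg _)
            (mul_nonneg (pow_nonneg hx 2)
              (div_nonneg (pow_nonneg hy l) (Nat.cast_nonneg _)))
      _ = ((Δ n)^2 * (lam^2 * (8*K))) * (((l:ℝ)+3)^4 * (lam*Δ 0)^l / l.factorial) := by
          ring
  have hE3 : Tendsto (fun n => (Δ n)⁻¹ * ∑' l : ℕ,
      (Real.exp (-(lam * Δ n)) * (lam * Δ n) ^ (l+2) / ((l+2).factorial : ℝ)) *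
        ∫ ω, qf a b c' d ((∑ k ∈ Finset.range (l+2), J k ω) + Δ n • c) ∂P) atTop
      (nhds 0) := by
    set C1 : ℝ := lam^2 * (8*K) * ∑' l : ℕ, ((l:ℝ)+3)^4 * (lam*Δ 0)^l / l.factorial
      with hC1
    have hb : ∀ n, ‖(Δ n)⁻¹ * ∑' l : ℕ,
        (Real.exp (-(lam * Δ n)) * (lam * Δ n) ^ (l+2) / ((l+2).factorial : ℝ)) *
          ∫ ω, qf a b c' d ((∑ k ∈ Finset.range (l+2), J k ω) + Δ n • c) ∂P‖
        ≤ Δ n * C1 := by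
      intro n
      have hnsum : Summable (fun l : ℕ =>
          ‖(Real.exp (-(lam * Δ n)) * (lam * Δ n) ^ (l+2) / ((l+2).factorial : ℝ)) *
            ∫ ω, qf a b c' d ((∑ k ∈ Finset.range (l+2), J k ω) + Δ n • c) ∂P‖) := by
        refine Summable.of_nonneg_of_le (fun l => norm_nonneg _) (fun l => ?_)
          (hgsum.mul_left ((Δ n)^2 * (lam^2 * (8*K))))
        rw [Real.norm_eq_abs]
        exact hterm n l
      have h1 : ‖∑' l : ℕ,
          (Real.exp (-(lam * Δ n)) * (lam * Δ n) ^ (l+2) / ((l+2).factorial : ℝ)) *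
            ∫ ω, qf a b c' d ((∑ k ∈ Finset.range (l+2), J k ω) + Δ n • c) ∂P‖
          ≤ ((Δ n)^2 * (lam^2 * (8*K))) *
            ∑' l : ℕ, ((l:ℝ)+3)^4 * (lam*Δ 0)^l / l.factorial := by
        refine (norm_tsum_le_tsum_norm hnsum).trans ?_
        rw [← tsum_mul_left]
        refine Summable.tsum_le_tsum (fun l => ?_) hnsum (hgsum.mul_left _)
        rw [Real.norm_eq_abs]
        exact hterm n l
      rw [norm_mul, Real.norm_eq_abs, abs_of_nonneg (inv_nonneg.mpr (hΔpos n).le)]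
      have h2 : (Δ n)⁻¹ * (((Δ n)^2 * (lam^2 * (8*K))) *
          ∑' l : ℕ, ((l:ℝ)+3)^4 * (lam*Δ 0)^l / l.factorial) = Δ n * C1 := by
        rw [hC1]
        have hne : Δ n ≠ 0 := (hΔpos n).ne'
        field_simp
      calc (Δ n)⁻¹ * ‖∑' l : ℕ,
          (Real.exp (-(lam * Δ n)) * (lam * Δ n) ^ (l+2) / ((l+2).factorial : ℝ)) *
            ∫ ω, qf a b c' d ((∑ k ∈ Finset.range (l+2), J k ω) + Δ n • c) ∂P‖
          ≤ (Δ n)⁻¹ * (((Δ n)^2 * (lam^2 * (8*K))) *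
            ∑' l : ℕ, ((l:ℝ)+3)^4 * (lam*Δ 0)^l / l.factorial) :=
            mul_le_mul_of_nonneg_left h1 (inv_nonneg.mpr (hΔpos n).le)
        _ = Δ n * C1 := h2
    refine squeeze_zero_norm hb ?_
    have := hΔ.mul_const C1
    simpa using this
  -- assemble
  have hsummable : ∀ n, Summable (fun l : ℕ =>
      (Real.exp (-(lam * Δ n)) * (lam * Δ n) ^ l / (l.factorial : ℝ)) *
        ∫ ω, qf a b c' d ((∑ k ∈ Finset.range l, J k ω) + Δ n • c) ∂P) := by
    intro n
    refine Summable.of_norm_bounded hbsum (fun l => ?_)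
    rw [norm_mul, Real.norm_eq_abs, Real.norm_eq_abs,
      abs_of_nonneg (hp0 (Δ n) (hΔpos n) l)]
    calc Real.exp (-(lam * Δ n)) * (lam * Δ n) ^ l / (l.factorial : ℝ) *
          |∫ ω, qf a b c' d ((∑ k ∈ Finset.range l, J k ω) + Δ n • c) ∂P|
        ≤ ((lam*Δ 0)^l / l.factorial) * (8 * ((l:ℝ)+1)^4 * K) :=
          mul_le_mul (hple (Δ n) (hΔpos n).le (hΔ0 n) l)
            (hHb (Δ n) (hΔpos n).le (hΔ0 n) l) (abs_nonneg _)
            (div_nonneg (pow_nonneg hy l) (Nat.cast_nonneg _))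
      _ = _ := rfl
  have hsplit : ∀ n, (Δ n)⁻¹ * ∫ ω, qf a b c' d (L (Δ n) ω) ∂P
      = (Δ n)⁻¹ * ((Real.exp (-(lam * Δ n)) * (lam * Δ n) ^ 0 / (Nat.factorial 0 : ℝ)) *
          ∫ ω, qf a b c' d ((∑ k ∈ Finset.range 0, J k ω) + Δ n • c) ∂P)
        + ((Δ n)⁻¹ * ((Real.exp (-(lam * Δ n)) * (lam * Δ n) ^ 1 / (Nat.factorial 1 : ℝ)) *
            ∫ ω, qf a b c' d ((∑ k ∈ Finset.range 1, J k ω) + Δ n • c) ∂P)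
          + (Δ n)⁻¹ * ∑' l : ℕ,
            (Real.exp (-(lam * Δ n)) * (lam * Δ n) ^ (l+2) / ((l+2).factorial : ℝ)) *
              ∫ ω, qf a b c' d ((∑ k ∈ Finset.range (l+2), J k ω) + Δ n • c) ∂P) := by
    intro n
    rw [hkey (Δ n) (hΔpos n) (hΔ0 n)]
    rw [Summable.tsum_eq_zero_add (hsummable n),
      Summable.tsum_eq_zero_add ((summable_nat_add_iff 1).mpr (hsummable n))]
    rw [mul_add, mul_add]
  have hfinal := hE1.add (hE2.add hE3)
  rw [zero_add, add_zero] at hfinal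
  exact hfinal.congr fun n => (hsplit n).symm
end

section
/- Let f_i, f_j : [0,∞) → ℝ^{1×m} be square-integrable row-valued functions (extended by 0 to negative arguments), Σ_L ∈ ℝ^{m×m} symmetric positive semidefinite, and define γ_i(s) = ∫₀^∞ f_i(t+s) Σ_L f_i(t)^T dt, γ_j analogously, for s ≥ 0, and h ≥ 0. Then ∫₀^∞ ∫₀^∞ ∫₀^∞ f_j(s) Σ_L f_j(t)^T · f_i(u−h+s) Σ_L f_i(u−h+t)^T ds dt du = 2 ∫₀^∞ [∫₀^∞ (∫_{t+h}^∞ f_i(u+s) Σ_L f_i(u)^T du) f_j(t+s) Σ_L f_j(t)^T dt] ds, and combining with the analogous identity for the shifted kernel yields ∫₀^∞ [⟨kernel terms⟩] du = 2 ∫₀^∞ γ_j(s) γ_i(s) ds; i.e., e_j^T⊗e_i^T · [∫₀^∞ Σ*_Y(u−h) Σ_L⊗Σ_L Σ*_Y(u−h)^T + Σ_Y(u+h) Σ_L⊗Σ_L Σ_Y(u+h)^T du] · e_j⊗e_i = 2∫₀^∞ γ_j(s)γ_i(s) ds, where Σ_Y(u)=∫₀^∞ f(s+u)⊗f(s) ds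 and Σ*_Y(u)=∫₀^∞ f(s)⊗f(s+u) ds for the matrix kernel f with rows f_i. -/
open MeasureTheory Matrix Kronecker Set
open scoped ENNReal


namespace KQI

lemma integral_Ioi_comp_add_right (g : ℝ → ℝ) (a c : ℝ) :
    ∫ u in Ioi a, g (u + c) = ∫ u in Ioi (a + c), g u := by
  have A : MeasurableEmbedding (fun x : ℝ => x + c) :=
    (Homeomorph.addRight c).isClosedEmbedding.measurableEmbedding
  have h := A.setIntegral_map (μ := volume) (g := g) (s := Ioi (a + c))
  rw [map_add_right_eq_self (volume : Measure ℝ) c] at h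
  have hpre : (fun x : ℝ => x + c) ⁻¹' Ioi (a + c) = Ioi a := by
    ext x; simp [Set.mem_Ioi]
  rw [hpre] at h
  exact h.symm

lemma setIntegral_Ioi_zero_eq (g : ℝ → ℝ) (hg : ∀ s < (0:ℝ), g s = 0) :
    ∫ u in Ioi (0:ℝ), g u = ∫ u, g u := by
  apply setIntegral_eq_integral_of_ae_compl_eq_zero
  have h0 : ∀ᵐ (x : ℝ) ∂volume, x ≠ 0 := by
    rw [ae_iff]
    have : {a : ℝ | ¬a ≠ 0} = {(0:ℝ)} := by ext x; simp
    rw [this]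
    exact measure_singleton 0
  filter_upwards [h0] with x hx hmem
  exact hg x (lt_of_le_of_ne (not_lt.mp hmem) hx)

lemma integrable_of_lintegral_lt {α β : Type*} [MeasurableSpace α] [MeasurableSpace β]
    (μ : Measure α) (ν : Measure β) [SigmaFinite ν] (F : α × β → ℝ) (hm : Measurable F)
    (hfin : (∫⁻ x, ∫⁻ y, ‖F (x, y)‖₊ ∂ν ∂μ) < ⊤) : Integrable F (μ.prod ν) :=
  ⟨hm.aestronglyMeasurable, by
    rw [HasFiniteIntegral, lintegral_prod _ hm.enorm.aemeasurable]; exact hfin⟩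

lemma ennreal_mul_le_sq (a b : ℝ≥0∞) : a * b ≤ a ^ 2 + b ^ 2 := by
  rcases le_total a b with hab | hab
  · calc a * b ≤ b * b := mul_le_mul_left hab b
    _ = b ^ 2 := (sq b).symm
    _ ≤ _ := le_add_self
  · calc a * b ≤ a * a := mul_le_mul_right hab a
    _ = a ^ 2 := (sq a).symm
    _ ≤ _ := le_self_add

lemma abs_mul_le_sq (a b : ℝ) : |a * b| ≤ a ^ 2 + b ^ 2 := by
  rw [abs_mul]
  nlinarith [sq_nonneg (|a| - |b|), abs_nonneg a, abs_nonneg b, sq_abs a, sq_abs b]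

lemma lintegral_swap3 (H : ℝ → ℝ → ℝ → ℝ≥0∞)
    (hm : Measurable fun p : ℝ × ℝ × ℝ => H p.1 p.2.1 p.2.2) :
    ∫⁻ w, ∫⁻ s, ∫⁻ t, H w s t = ∫⁻ s, ∫⁻ t, ∫⁻ w, H w s t := by
  have h1 : Measurable fun p : ℝ × ℝ => ∫⁻ t, H p.1 p.2 t := by
    have hm' : Measurable (Function.uncurry fun (x : ℝ × ℝ) (y : ℝ) => H x.1 x.2 y) :=
      hm.comp ((measurable_fst.fst).prodMk ((measurable_fst.snd).prodMk measurable_snd))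
    exact hm'.lintegral_prod_right
  rw [lintegral_lintegral_swap (h1.aemeasurable (μ := volume.prod volume))]
  congr 1
  ext s
  have hm2 : Measurable (Function.uncurry fun (w : ℝ) (t : ℝ) => H w s t) :=
    hm.comp (measurable_fst.prodMk (measurable_const.prodMk measurable_snd))
  exact lintegral_lintegral_swap hm2.aemeasurable




lemma sum_swap12 {M : Type*} [AddCommMonoid M] {n : ℕ} (F : Fin n → Fin n → M) :
    ∑ c, ∑ p, F c p = ∑ p, ∑ c, F c p := Finset.sum_comm

lemma expand_aux {m : ℕ} (S : Matrix (Fin m) (Fin m) ℝ)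
    (a b : Fin m → ℝ → ℝ)
    (hab : ∀ p q, Integrable (fun t => a p t * b q t) volume) :
    (∫ s, ∫ t, (∑ c, ∑ p, a p s * S p c * a c t) * (∑ c', ∑ q, b q s * S q c' * b c' t))
      = ∑ c, ∑ c', ∑ p, ∑ q,
          (∫ s, a p s * b q s) * ((S p c * S q c') * ∫ t, a c t * b c' t) := by
  have key : ∀ s t : ℝ,
      (∑ c, ∑ p, a p s * S p c * a c t) * (∑ c', ∑ q, b q s * S q c' * b c' t)
        = ∑ c, ∑ c', ∑ p, ∑ q,
            (a p s * b q s) * ((S p c * S q c') * (a c t * b c' t)) := by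
    intro s t
    rw [Finset.sum_mul_sum]
    refine Finset.sum_congr rfl fun c _ => Finset.sum_congr rfl fun c' _ => ?_
    rw [Finset.sum_mul_sum]
    exact Finset.sum_congr rfl fun p _ => Finset.sum_congr rfl fun q _ => by ring
  have inner : ∀ s : ℝ,
      (∫ t, (∑ c, ∑ p, a p s * S p c * a c t) * (∑ c', ∑ q, b q s * S q c' * b c' t))
        = ∑ c, ∑ c', ∑ p, ∑ q,
            (a p s * b q s) * ((S p c * S q c') * ∫ t, a c t * b c' t) := by
    intro s
    simp_rw [key s]
    rw [integral_finset_sum _ (fun c _ => integrable_finset_sum _ (fun c' _ =>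
      integrable_finset_sum _ (fun p _ => integrable_finset_sum _ (fun q _ =>
        ((hab _ _).const_mul _).const_mul _))))]
    refine Finset.sum_congr rfl fun c _ => ?_
    rw [integral_finset_sum _ (fun c' _ => integrable_finset_sum _ (fun p _ =>
      integrable_finset_sum _ (fun q _ => ((hab _ _).const_mul _).const_mul _)))]
    refine Finset.sum_congr rfl fun c' _ => ?_
    rw [integral_finset_sum _ (fun p _ => integrable_finset_sum _ (fun q _ =>
      ((hab _ _).const_mul _).const_mul _))]
    refine Finset.sum_congr rfl fun p _ => ?_
    rw [integral_finset_sum _ (fun q _ => ((hab _ _).const_mul _).const_mul _)]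
    refine Finset.sum_congr rfl fun q _ => ?_
    rw [integral_const_mul, integral_const_mul]
  have houter : (fun s => ∫ t, (∑ c, ∑ p, a p s * S p c * a c t)
      * (∑ c', ∑ q, b q s * S q c' * b c' t))
      = fun s => ∑ c, ∑ c', ∑ p, ∑ q,
          (a p s * b q s) * ((S p c * S q c') * ∫ t, a c t * b c' t) := funext inner
  rw [houter]
  rw [integral_finset_sum _ (fun c _ => integrable_finset_sum _ (fun c' _ =>
    integrable_finset_sum _ (fun p _ => integrable_finset_sum _ (fun q _ =>
      (hab _ _).mul_const _))))]
  refine Finset.sum_congr rfl fun c _ => ?_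
  rw [integral_finset_sum _ (fun c' _ => integrable_finset_sum _ (fun p _ =>
    integrable_finset_sum _ (fun q _ => (hab _ _).mul_const _)))]
  refine Finset.sum_congr rfl fun c' _ => ?_
  rw [integral_finset_sum _ (fun p _ => integrable_finset_sum _ (fun q _ =>
    (hab _ _).mul_const _))]
  refine Finset.sum_congr rfl fun p _ => ?_
  rw [integral_finset_sum _ (fun q _ => (hab _ _).mul_const _)]
  exact Finset.sum_congr rfl fun q _ => integral_mul_const _ _



lemma integrable_of_Ioi (u : ℝ → ℝ) (hm : Measurable u) (hz : ∀ s < (0:ℝ), u s = 0)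
    (hi : IntegrableOn u (Ioi 0)) : Integrable u volume := by
  have hIic : IntegrableOn u (Iic 0) := by
    have h0 : ∀ᵐ (x : ℝ) ∂volume.restrict (Iic 0), u x = 0 := by
      have h1 : ∀ᵐ (x : ℝ) ∂volume.restrict (Iic 0), x ≠ 0 := by
        rw [ae_iff]
        have : {a : ℝ | ¬a ≠ 0} = {(0:ℝ)} := by ext x; simp
        rw [this]
        refine le_antisymm (le_trans (Measure.restrict_le_self _) ?_) zero_le
        rw [measure_singleton]
      filter_upwards [h1, ae_restrict_mem measurableSet_Iic] with x hx hmem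
      exact hz x (lt_of_le_of_ne hmem hx)
    exact (integrable_congr h0).mpr (integrable_zero _ _ _)
  have := hIic.union hi
  rwa [Iic_union_Ioi, integrableOn_univ] at this


lemma lint_sum2 {n : ℕ} (F : Fin n → Fin n → ℝ≥0∞) (v : Fin n → Fin n → ℝ → ℝ≥0∞)
    (hv : ∀ x p, Measurable (v x p)) :
    ∫⁻ t, ∑ x, ∑ p, F x p * v x p t = ∑ x, ∑ p, F x p * ∫⁻ t, v x p t := by
  rw [lintegral_finset_sum _ (fun x _ => Finset.measurable_sum _ (fun p _ => (hv x p).const_mul _))]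
  refine Finset.sum_congr rfl fun x _ => ?_
  rw [lintegral_finset_sum _ (fun p _ => (hv x p).const_mul _)]
  exact Finset.sum_congr rfl fun p _ => lintegral_const_mul _ (hv x p)

lemma lintegral2_sep {n : ℕ} (c : Fin n → Fin n → ℝ≥0∞) (u : Fin n → ℝ → ℝ≥0∞)
    (hu : ∀ p, Measurable (u p)) :
    (∫⁻ s, ∫⁻ t, ∑ x, ∑ p, c p x * (u p s * u x t))
      = ∑ x, ∑ p, c p x * ((∫⁻ y, u p y) * ∫⁻ y, u x y) := by
  have h1 : ∀ s : ℝ, (∫⁻ t, ∑ x, ∑ p, c p x * (u p s * u x t))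
      = ∑ x, ∑ p, (c p x * (∫⁻ y, u x y)) * u p s := by
    intro s
    have e : ∀ t, (∑ x, ∑ p, c p x * (u p s * u x t))
        = ∑ x, ∑ p, (c p x * u p s) * u x t := by
      intro t
      exact Finset.sum_congr rfl fun x _ => Finset.sum_congr rfl fun p _ => by ring
    rw [lintegral_congr e, lint_sum2 (fun x p => c p x * u p s) (fun x _ => u x)
      (fun x _ => hu x)]
    exact Finset.sum_congr rfl fun x _ => Finset.sum_congr rfl fun p _ => by ring
  rw [lintegral_congr h1, lint_sum2 (fun x p => c p x * (∫⁻ y, u x y)) (fun _ p => u p)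
    (fun _ p => hu p)]
  exact Finset.sum_congr rfl fun x _ => Finset.sum_congr rfl fun p _ => by ring

lemma lintegral2_sep_shift {n : ℕ} (c : Fin n → Fin n → ℝ≥0∞) (u : Fin n → ℝ → ℝ≥0∞)
    (hu : ∀ p, Measurable (u p)) :
    (∫⁻ t, ∫⁻ s, ∑ x, ∑ p, c p x * (u p (s + t) * u x t))
      = ∑ x, ∑ p, c p x * ((∫⁻ y, u p y) * ∫⁻ y, u x y) := by
  have h1 : ∀ t : ℝ, (∫⁻ s, ∑ x, ∑ p, c p x * (u p (s + t) * u x t))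
      = ∑ x, ∑ p, (c p x * (∫⁻ y, u p y)) * u x t := by
    intro t
    have e : ∀ s, (∑ x, ∑ p, c p x * (u p (s + t) * u x t))
        = ∑ x, ∑ p, (c p x * u x t) * u p (s + t) := by
      intro s
      exact Finset.sum_congr rfl fun x _ => Finset.sum_congr rfl fun p _ => by ring
    rw [lintegral_congr e, lint_sum2 (fun x p => c p x * u x t)
      (fun _ p s => u p (s + t)) (fun _ p => (hu p).comp (measurable_add_const t))]
    refine Finset.sum_congr rfl fun x _ => Finset.sum_congr rfl fun p _ => ?_
    rw [lintegral_add_right_eq_self (u p) t]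
    ring
  rw [lintegral_congr h1, lint_sum2 (fun x p => c p x * (∫⁻ y, u p y)) (fun x _ => u x)
    (fun x _ => hu x)]
  exact Finset.sum_congr rfl fun x _ => Finset.sum_congr rfl fun p _ => by ring

lemma lintegral2_sep_shift' {n : ℕ} (c : Fin n → Fin n → ℝ≥0∞) (u : Fin n → ℝ → ℝ≥0∞)
    (hu : ∀ p, Measurable (u p)) :
    (∫⁻ s, ∫⁻ w, ∑ x, ∑ p, c p x * (u p (w + s) * u x w))
      = ∑ x, ∑ p, c p x * ((∫⁻ y, u p y) * ∫⁻ y, u x y) := by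
  have hmz : Measurable (Function.uncurry fun (s w : ℝ) =>
      ∑ x, ∑ p, c p x * (u p (w + s) * u x w)) := by
    refine Finset.measurable_sum _ fun x _ => Finset.measurable_sum _ fun p _ => ?_
    exact (((hu p).comp (measurable_snd.add measurable_fst)).mul
      ((hu x).comp measurable_snd)).const_mul _
  rw [lintegral_lintegral_swap hmz.aemeasurable]
  have h1 : ∀ w : ℝ, (∫⁻ s, ∑ x, ∑ p, c p x * (u p (w + s) * u x w))
      = ∑ x, ∑ p, (c p x * (∫⁻ y, u p y)) * u x w := by
    intro w
    have e : ∀ s, (∑ x, ∑ p, c p x * (u p (w + s) * u x w))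
        = ∑ x, ∑ p, (c p x * u x w) * u p (s + w) := by
      intro s
      refine Finset.sum_congr rfl fun x _ => Finset.sum_congr rfl fun p _ => ?_
      rw [add_comm s w]; ring
    rw [lintegral_congr e, lint_sum2 (fun x p => c p x * u x w)
      (fun _ p s => u p (s + w)) (fun _ p => (hu p).comp (measurable_add_const w))]
    refine Finset.sum_congr rfl fun x _ => Finset.sum_congr rfl fun p _ => ?_
    rw [lintegral_add_right_eq_self (u p) w]
    ring
  rw [lintegral_congr h1, lint_sum2 (fun x p => c p x * (∫⁻ y, u p y)) (fun x _ => u x)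
    (fun x _ => hu x)]
  exact Finset.sum_congr rfl fun x _ => Finset.sum_congr rfl fun p _ => by ring

end KQI

set_option maxHeartbeats 1000000 in
open KQI in
/-- With `Σ_Y(u) = ∫₀^∞ f(s+u) ⊗ f(s) ds`, `Σ*_Y(u) = ∫₀^∞ f(s) ⊗ f(s+u) ds`
(`f` extended by `0` to negative arguments) and
`γ_i(s) = ∫₀^∞ f_i(t+s) Σ_L f_i(t)ᵀ dt` for the rows `f_i = e_iᵀ f`, one has
`(e_jᵀ ⊗ e_iᵀ) [∫₀^∞ Σ*_Y(u−h) (Σ_L ⊗ Σ_L) Σ*_Y(u−h)ᵀ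
  + Σ_Y(u+h) (Σ_L ⊗ Σ_L) Σ_Y(u+h)ᵀ du] (e_j ⊗ e_i) = 2 ∫₀^∞ γ_j(s) γ_i(s) ds`. -/
theorem kernel_quadratic_identity (d m : ℕ)
    (f : ℝ → Matrix (Fin d) (Fin m) ℝ)
    (hfmeas : ∀ a b, Measurable fun s => f s a b)
    (hf0 : ∀ s < (0 : ℝ), f s = 0)
    (hf1 : ∀ a b, IntegrableOn (fun s => |f s a b|) (Set.Ioi 0))
    (hf2 : ∀ a b, IntegrableOn (fun s => (f s a b) ^ 2) (Set.Ioi 0))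
    (SigL : Matrix (Fin m) (Fin m) ℝ) (hSigL : SigL.PosSemidef)
    (h : ℝ) (hh : 0 ≤ h)
    (γ : Fin d → ℝ → ℝ)
    (hγ : ∀ (i : Fin d) (s : ℝ), γ i s =
      ∫ t in Set.Ioi (0 : ℝ), (f (t + s) * SigL * (f t)ᵀ) i i)
    (SigY SigYstar : ℝ → Matrix (Fin d × Fin d) (Fin m × Fin m) ℝ)
    (hSigY : ∀ u p q, SigY u p q =
      ∫ s in Set.Ioi (0 : ℝ), ((f (s + u)) ⊗ₖ (f s)) p q)
    (hSigYstar : ∀ u p q, SigYstar u p q =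
      ∫ s in Set.Ioi (0 : ℝ), ((f s) ⊗ₖ (f (s + u))) p q)
    (i j : Fin d) :
    ∫ u in Set.Ioi (0 : ℝ),
        ((SigYstar (u - h) * ((SigL ⊗ₖ SigL) : Matrix (Fin m × Fin m) (Fin m × Fin m) ℝ)
            * (SigYstar (u - h))ᵀ) (j, i) (j, i)
          + (SigY (u + h) * ((SigL ⊗ₖ SigL) : Matrix (Fin m × Fin m) (Fin m × Fin m) ℝ)
            * (SigY (u + h))ᵀ) (j, i) (j, i))
      = 2 * ∫ s in Set.Ioi (0 : ℝ), γ j s * γ i s := by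
  classical
  -- row entry functions
  obtain ⟨g, hgdef⟩ : ∃ g : Fin d → Fin m → ℝ → ℝ, ∀ k p s, g k p s = f s k p :=
    ⟨_, fun _ _ _ => rfl⟩
  obtain ⟨E, hEdef⟩ : ∃ E : Fin d → ℝ → ℝ → ℝ,
      ∀ k a b, E k a b = (f a * SigL * (f b)ᵀ) k k := ⟨_, fun _ _ _ => rfl⟩
  have hSsymm : ∀ p c : Fin m, SigL c p = SigL p c := by
    intro p c
    have h1 := congrFun (congrFun hSigL.1 p) c
    simpa [Matrix.conjTranspose_apply] using h1
  have hEfor : ∀ k a b, E k a b = ∑ c, ∑ p, g k p a * SigL p c * g k c b := by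
    intro k a b
    rw [hEdef k a b]
    simp only [Matrix.mul_apply, Matrix.transpose_apply, Finset.sum_mul, hgdef]
  have hgm : ∀ k p, Measurable (g k p) := by
    intro k p
    have he : g k p = fun s => f s k p := funext fun s => hgdef k p s
    rw [he]; exact hfmeas k p
  have hgz : ∀ k p (s : ℝ), s < 0 → g k p s = 0 := by
    intro k p s hs; rw [hgdef k p s, hf0 s hs]; simp
  have hg1 : ∀ k p, Integrable (g k p) volume := by
    intro k p
    refine integrable_of_Ioi (g k p) (hgm k p) (hgz k p) ?_
    refine (hf1 k p).mono' ((hgm k p).aestronglyMeasurable.restrict) (ae_of_all _ fun s => ?_)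
    simp [hgdef, Real.norm_eq_abs]
  have hg2 : ∀ k p, Integrable (fun s => (g k p s) ^ 2) volume := by
    intro k p
    refine integrable_of_Ioi _ ((hgm k p).pow_const 2) (fun s hs => by simp [hgz k p s hs]) ?_
    refine (hf2 k p).mono' (((hgm k p).pow_const 2).aestronglyMeasurable.restrict)
      (ae_of_all _ fun s => ?_)
    simp [Real.norm_eq_abs, abs_pow, sq_abs, hgdef]
  have hEm : ∀ k, Measurable (fun z : ℝ × ℝ => E k z.1 z.2) := by
    intro k
    have he : (fun z : ℝ × ℝ => E k z.1 z.2)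
        = fun z : ℝ × ℝ => ∑ c, ∑ p, g k p z.1 * SigL p c * g k c z.2 :=
      funext fun z => hEfor k z.1 z.2
    rw [he]
    refine Finset.measurable_sum _ fun c _ => Finset.measurable_sum _ fun p _ => ?_
    exact (((hgm k p).comp measurable_fst).mul measurable_const).mul
      ((hgm k c).comp measurable_snd)
  have hEzr : ∀ k (a b : ℝ), b < 0 → E k a b = 0 := by
    intro k a b hb; rw [hEdef k a b, hf0 b hb]; simp
  have hEzl : ∀ k (a b : ℝ), a < 0 → E k a b = 0 := by
    intro k a b ha; rw [hEdef k a b, hf0 a ha]; simp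
  have hEsymm : ∀ k (a b : ℝ), E k a b = E k b a := by
    intro k a b
    rw [hEfor k a b, hEfor k b a]
    conv_rhs => rw [Finset.sum_comm]
    refine Finset.sum_congr rfl fun c _ => Finset.sum_congr rfl fun p _ => ?_
    rw [hSsymm c p]
    ring
  have hprod : ∀ (k k' : Fin d) (p q : Fin m) (c : ℝ),
      Integrable (fun s => g k p s * g k' q (s + c)) volume := by
    intro k k' p q c
    have hb : Integrable (fun s => (g k p s) ^ 2 + (g k' q (s + c)) ^ 2) volume :=
      (hg2 k p).add ((hg2 k' q).comp_add_right c)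
    refine hb.mono' ((hgm k p).mul ((hgm k' q).comp
      (measurable_add_const c))).aestronglyMeasurable (ae_of_all _ fun s => ?_)
    rw [Real.norm_eq_abs]
    exact abs_mul_le_sq _ _
  -- ENNReal bound layer
  obtain ⟨eB, heBdef⟩ : ∃ eB : Fin d → ℝ → ℝ → ℝ≥0∞, ∀ k a b, eB k a b =
      ∑ c, ∑ p, (‖SigL p c‖₊ : ℝ≥0∞) * ((‖g k p a‖₊ : ℝ≥0∞) * (‖g k c b‖₊ : ℝ≥0∞)) :=
    ⟨_, fun _ _ _ => rfl⟩
  have hEbnd : ∀ k (a b : ℝ), (‖E k a b‖₊ : ℝ≥0∞) ≤ eB k a b := by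
    intro k a b
    rw [hEfor, heBdef k a b]
    calc ((‖∑ c, ∑ p, g k p a * SigL p c * g k c b‖₊ : ℝ≥0∞))
        ≤ ∑ c, (‖∑ p, g k p a * SigL p c * g k c b‖₊ : ℝ≥0∞) := by
          exact_mod_cast nnnorm_sum_le _ _
      _ ≤ ∑ c, ∑ p, (‖g k p a * SigL p c * g k c b‖₊ : ℝ≥0∞) :=
          Finset.sum_le_sum fun c _ => by exact_mod_cast nnnorm_sum_le _ _
      _ = ∑ c, ∑ p, (‖SigL p c‖₊ : ℝ≥0∞) * ((‖g k p a‖₊ : ℝ≥0∞) * (‖g k c b‖₊ : ℝ≥0∞)) :=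
          Finset.sum_congr rfl fun c _ => Finset.sum_congr rfl fun p _ => by
            rw [nnnorm_mul, nnnorm_mul]; push_cast; ring
  have hL1 : ∀ k p, (∫⁻ x, (‖g k p x‖₊ : ℝ≥0∞)) < ⊤ := fun k p => (hg1 k p).2
  have hL2 : ∀ k p, (∫⁻ x, (‖g k p x‖₊ : ℝ≥0∞) ^ 2) < ⊤ := by
    intro k p
    have h2 := (hg2 k p).2
    rw [HasFiniteIntegral] at h2
    refine lt_of_eq_of_lt (lintegral_congr fun x => ?_) h2
    rw [enorm_pow]; rfl
  obtain ⟨C, hCdef⟩ : ∃ C : Fin d → ℝ≥0∞, ∀ k, C k =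
      ∑ c, ∑ p, (‖SigL p c‖₊ : ℝ≥0∞) *
        ((∫⁻ x, (‖g k p x‖₊ : ℝ≥0∞) ^ 2) + ∫⁻ x, (‖g k c x‖₊ : ℝ≥0∞) ^ 2) :=
    ⟨_, fun _ => rfl⟩
  have hCfin : ∀ k, C k < ⊤ := by
    intro k
    rw [hCdef k]
    refine ENNReal.sum_lt_top.mpr fun c _ => ENNReal.sum_lt_top.mpr fun p _ => ?_
    exact ENNReal.mul_lt_top ENNReal.coe_lt_top (ENNReal.add_lt_top.mpr ⟨hL2 k p, hL2 k c⟩)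
  have hshift : ∀ k (r : ℝ), (∫⁻ w, eB k (w + r) w) ≤ C k := by
    intro k r
    have he : (fun w => eB k (w + r) w) = fun w =>
        ∑ c, ∑ p, (‖SigL p c‖₊ : ℝ≥0∞) * ((‖g k p (w + r)‖₊ : ℝ≥0∞) * (‖g k c w‖₊ : ℝ≥0∞)) :=
      funext fun w => heBdef k _ _
    rw [he]
    rw [lint_sum2 (fun c p => (‖SigL p c‖₊ : ℝ≥0∞))
      (fun c p w => (‖g k p (w + r)‖₊ : ℝ≥0∞) * (‖g k c w‖₊ : ℝ≥0∞))
      (fun c p => (((hgm k p).comp (measurable_add_const r)).enorm).mul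
        ((hgm k c).enorm))]
    rw [hCdef k]
    refine Finset.sum_le_sum fun c _ => Finset.sum_le_sum fun p _ => mul_le_mul_right ?_ _
    calc (∫⁻ w, (‖g k p (w + r)‖₊ : ℝ≥0∞) * (‖g k c w‖₊ : ℝ≥0∞))
        ≤ ∫⁻ w, ((‖g k p (w + r)‖₊ : ℝ≥0∞) ^ 2 + (‖g k c w‖₊ : ℝ≥0∞) ^ 2) :=
          lintegral_mono fun w => ennreal_mul_le_sq _ _
      _ = (∫⁻ w, (‖g k p (w + r)‖₊ : ℝ≥0∞) ^ 2) + ∫⁻ w, (‖g k c w‖₊ : ℝ≥0∞) ^ 2 :=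
          lintegral_add_left (((hgm k p).comp (measurable_add_const r)).enorm.pow_const 2) _
      _ = (∫⁻ x, (‖g k p x‖₊ : ℝ≥0∞) ^ 2) + ∫⁻ x, (‖g k c x‖₊ : ℝ≥0∞) ^ 2 := by
          rw [lintegral_add_right_eq_self (fun w => (‖g k p w‖₊ : ℝ≥0∞) ^ 2) r]
  have heBL1 : ∀ k : Fin d, (∫⁻ s, ∫⁻ t, eB k s t) < ⊤ := by
    intro k
    have he : ∀ s : ℝ, (fun t => eB k s t) = fun t =>
        ∑ c, ∑ p, (‖SigL p c‖₊ : ℝ≥0∞) * ((‖g k p s‖₊ : ℝ≥0∞) * (‖g k c t‖₊ : ℝ≥0∞)) :=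
      fun s => funext fun t => heBdef k _ _
    simp only [he]
    rw [lintegral2_sep (fun p c => (‖SigL p c‖₊ : ℝ≥0∞))
      (fun p y => (‖g k p y‖₊ : ℝ≥0∞)) (fun p => (hgm k p).enorm)]
    refine ENNReal.sum_lt_top.mpr fun c _ => ENNReal.sum_lt_top.mpr fun p _ => ?_
    exact ENNReal.mul_lt_top ENNReal.coe_lt_top (ENNReal.mul_lt_top (hL1 k p) (hL1 k c))
  have hγbar : ∀ k (r : ℝ), γ k r = ∫ w, E k (w + r) w := by
    intro k r
    rw [hγ k r]
    have he : (∫ t in Ioi (0:ℝ), (f (t + r) * SigL * (f t)ᵀ) k k)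
        = ∫ t in Ioi (0:ℝ), E k (t + r) t :=
      setIntegral_congr_fun measurableSet_Ioi fun t _ => by rw [hEdef k (t + r) t]
    rw [he]
    exact setIntegral_Ioi_zero_eq _ (fun t ht => hEzr k _ t ht)
  have hγm : ∀ k, Measurable (γ k) := by
    intro k
    have he : γ k = fun r => ∫ w, E k (w + r) w := funext fun r => hγbar k r
    rw [he]
    have hu : Measurable (fun p : ℝ × ℝ => E k (p.2 + p.1) p.2) :=
      (hEm k).comp ((measurable_snd.add measurable_fst).prodMk measurable_snd)
    exact hu.stronglyMeasurable.integral_prod_right'.measurable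
  have hγbd : ∀ k (r : ℝ), (‖γ k r‖₊ : ℝ≥0∞) ≤ C k := by
    intro k r
    rw [hγbar k r]
    calc ((‖∫ w, E k (w + r) w‖₊ : ℝ≥0∞))
        ≤ ∫⁻ w, ‖E k (w + r) w‖₊ := enorm_integral_le_lintegral_enorm _
      _ ≤ ∫⁻ w, eB k (w + r) w := lintegral_mono fun w => hEbnd k _ _
      _ ≤ C k := hshift k r
  have hγeven : ∀ k (σ : ℝ), γ k (-σ) = γ k σ := by
    intro k σ
    rw [hγbar k (-σ), hγbar k σ]
    calc (∫ w, E k (w + -σ) w)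
        = ∫ w, E k (w + σ + -σ) (w + σ) :=
          (integral_add_right_eq_self (fun w => E k (w + -σ) w) σ).symm
      _ = ∫ w, E k w (w + σ) := by
          congr 1; ext w; rw [show w + σ + -σ = w by ring]
      _ = ∫ w, E k (w + σ) w := by
          congr 1; ext w; exact hEsymm k _ _
  -- the double-integral functions
  obtain ⟨W, hWdef⟩ : ∃ W : ℝ → ℝ,
      ∀ w, W w = ∫ s, ∫ t, E i s t * E j (s + w) (t + w) := ⟨_, fun _ => rfl⟩
  obtain ⟨V, hVdef⟩ : ∃ V : ℝ → ℝ,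
      ∀ v, V v = ∫ s, ∫ t, E j s t * E i (s + v) (t + v) := ⟨_, fun _ => rfl⟩
  -- step A : matrix entries
  have hstar : ∀ v : ℝ,
      (SigYstar v * ((SigL ⊗ₖ SigL) : Matrix (Fin m × Fin m) (Fin m × Fin m) ℝ)
        * (SigYstar v)ᵀ) (j, i) (j, i) = V v := by
    intro v
    have hM : ∀ p q : Fin m, SigYstar v (j, i) (p, q) = ∫ s, g j p s * g i q (s + v) := by
      intro p q
      rw [hSigYstar v (j, i) (p, q)]
      have he : ∀ s : ℝ, ((f s) ⊗ₖ (f (s + v))) (j, i) (p, q) = g j p s * g i q (s + v) := by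
        intro s; rw [Matrix.kroneckerMap_apply, hgdef, hgdef]
      rw [setIntegral_congr_fun measurableSet_Ioi (fun s _ => he s)]
      exact setIntegral_Ioi_zero_eq _ (fun s hs => by rw [hgz j p s hs]; ring)
    have hexp : V v = ∑ c, ∑ c', ∑ p, ∑ q, (∫ s, g j p s * g i q (s + v))
        * ((SigL p c * SigL q c') * ∫ t, g j c t * g i c' (t + v)) := by
      rw [hVdef v]
      have he : ∀ s : ℝ, (fun t => E j s t * E i (s + v) (t + v)) = fun t =>
          (∑ c, ∑ p, g j p s * SigL p c * g j c t)
            * (∑ c', ∑ q, g i q (s + v) * SigL q c' * g i c' (t + v)) := by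
        intro s; funext t; rw [hEfor, hEfor]
      simp only [he]
      exact expand_aux SigL (fun p => g j p) (fun q s => g i q (s + v))
        (fun p q => hprod j i p q v)
    have hent : (SigYstar v * ((SigL ⊗ₖ SigL) : Matrix (Fin m × Fin m) (Fin m × Fin m) ℝ)
        * (SigYstar v)ᵀ) (j, i) (j, i)
        = ∑ y : Fin m × Fin m, (∑ x : Fin m × Fin m,
            SigYstar v (j, i) x * (SigL x.1 y.1 * SigL x.2 y.2)) * SigYstar v (j, i) y := by
      rw [Matrix.mul_apply]
      refine Finset.sum_congr rfl fun y _ => ?_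
      rw [Matrix.mul_apply, Matrix.transpose_apply]
      congr 1
    rw [hent, hexp]
    simp only [hM, Fintype.sum_prod_type]
    refine Finset.sum_congr rfl fun c _ => Finset.sum_congr rfl fun c' _ => ?_
    rw [Finset.sum_mul]
    refine Finset.sum_congr rfl fun p _ => ?_
    rw [Finset.sum_mul]
    exact Finset.sum_congr rfl fun q _ => by ring
  have hYent : ∀ w : ℝ,
      (SigY w * ((SigL ⊗ₖ SigL) : Matrix (Fin m × Fin m) (Fin m × Fin m) ℝ)
        * (SigY w)ᵀ) (j, i) (j, i) = W w := by
    intro w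
    have hM : ∀ p q : Fin m, SigY w (j, i) (p, q) = ∫ s, g i q s * g j p (s + w) := by
      intro p q
      rw [hSigY w (j, i) (p, q)]
      have he : ∀ s : ℝ, ((f (s + w)) ⊗ₖ (f s)) (j, i) (p, q) = g i q s * g j p (s + w) := by
        intro s; rw [Matrix.kroneckerMap_apply, hgdef, hgdef]; ring
      rw [setIntegral_congr_fun measurableSet_Ioi (fun s _ => he s)]
      exact setIntegral_Ioi_zero_eq _ (fun s hs => by rw [hgz i q s hs]; ring)
    have hexp : W w = ∑ c, ∑ c', ∑ p, ∑ q, (∫ s, g i p s * g j q (s + w))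
        * ((SigL p c * SigL q c') * ∫ t, g i c t * g j c' (t + w)) := by
      rw [hWdef w]
      have he : ∀ s : ℝ, (fun t => E i s t * E j (s + w) (t + w)) = fun t =>
          (∑ c, ∑ p, g i p s * SigL p c * g i c t)
            * (∑ c', ∑ q, g j q (s + w) * SigL q c' * g j c' (t + w)) := by
        intro s; funext t; rw [hEfor, hEfor]
      simp only [he]
      exact expand_aux SigL (fun p => g i p) (fun q s => g j q (s + w))
        (fun p q => hprod i j p q w)
    have hent : (SigY w * ((SigL ⊗ₖ SigL) : Matrix (Fin m × Fin m) (Fin m × Fin m) ℝ)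
        * (SigY w)ᵀ) (j, i) (j, i)
        = ∑ y : Fin m × Fin m, (∑ x : Fin m × Fin m,
            SigY w (j, i) x * (SigL x.1 y.1 * SigL x.2 y.2)) * SigY w (j, i) y := by
      rw [Matrix.mul_apply]
      refine Finset.sum_congr rfl fun y _ => ?_
      rw [Matrix.mul_apply, Matrix.transpose_apply]
      congr 1
    rw [hent, hexp]
    simp only [hM, Fintype.sum_prod_type]
    rw [sum_swap12]
    refine Finset.sum_congr rfl fun c _ => ?_
    refine Finset.sum_congr rfl fun c' _ => ?_
    rw [sum_swap12 (fun x1 x2 => (∫ s, g i x2 s * g j x1 (s + w))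
      * (SigL x1 c' * SigL x2 c))]
    rw [Finset.sum_mul]
    refine Finset.sum_congr rfl fun p _ => ?_
    rw [Finset.sum_mul]
    exact Finset.sum_congr rfl fun q _ => by ring
  have hVW : ∀ v : ℝ, V v = W (-v) := by
    intro v
    rw [hVdef v, hWdef (-v)]
    have h1 : ∀ s' : ℝ, (∫ t, E j s' t * E i (s' + v) (t + v))
        = ∫ t, E j s' (t + -v) * E i (s' + v) t := by
      intro s'
      rw [← integral_add_right_eq_self (fun t => E j s' (t + -v) * E i (s' + v) t) v]
      congr 1; ext t; rw [show t + v + -v = t by ring]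
    calc (∫ s, ∫ t, E j s t * E i (s + v) (t + v))
        = ∫ s, ∫ t, E j s (t + -v) * E i (s + v) t := by
          congr 1; ext s; exact h1 s
      _ = ∫ s, ∫ t, E j (s + v + -v) (t + -v) * E i (s + v) t := by
          congr 1; ext s; congr 1; ext t; rw [show s + v + -v = s by ring]
      _ = ∫ s, ∫ t, E j (s + -v) (t + -v) * E i s t :=
          integral_add_right_eq_self (fun s => ∫ t, E j (s + -v) (t + -v) * E i s t) v
      _ = ∫ s, ∫ t, E i s t * E j (s + -v) (t + -v) := by
          congr 1; ext s; congr 1; ext t; ring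
  -- master integrability
  have hFm : Measurable (fun p : ℝ × ℝ × ℝ =>
      E i p.2.1 p.2.2 * E j (p.2.1 + p.1) (p.2.2 + p.1)) := by
    exact ((hEm i).comp (measurable_snd.fst.prodMk measurable_snd.snd)).mul
      ((hEm j).comp ((measurable_snd.fst.add measurable_fst).prodMk
        (measurable_snd.snd.add measurable_fst)))
  have hmaster : Integrable (fun p : ℝ × (ℝ × ℝ) =>
      E i p.2.1 p.2.2 * E j (p.2.1 + p.1) (p.2.2 + p.1))
      (volume.prod (volume.prod volume)) := by
    have hEshiftC : ∀ s t : ℝ, (∫⁻ w, (‖E j (s + w) (t + w)‖₊ : ℝ≥0∞)) ≤ C j := by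
      intro s t
      have h1 : (∫⁻ w, (‖E j (s + w) (t + w)‖₊ : ℝ≥0∞))
          = ∫⁻ w, (‖E j (w + (s - t)) w‖₊ : ℝ≥0∞) := by
        rw [← lintegral_add_right_eq_self (fun w => (‖E j (w + (s - t)) w‖₊ : ℝ≥0∞)) t]
        congr 1; ext w
        rw [show w + t + (s - t) = s + w by ring, show w + t = t + w by ring]
      rw [h1]
      exact le_trans (lintegral_mono fun w => hEbnd j _ _) (hshift j (s - t))
    refine integrable_of_lintegral_lt volume (volume.prod volume) _ hFm ?_
    have hin : ∀ w : ℝ, (∫⁻ z : ℝ × ℝ, ‖E i z.1 z.2 * E j (z.1 + w) (z.2 + w)‖₊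
          ∂(volume.prod volume))
        = ∫⁻ s, ∫⁻ t, (‖E i s t * E j (s + w) (t + w)‖₊ : ℝ≥0∞) := by
      intro w
      refine lintegral_prod _ ?_
      exact (((hEm i).mul ((hEm j).comp ((measurable_fst.add_const w).prodMk
        (measurable_snd.add_const w)))).enorm).aemeasurable
    calc (∫⁻ w, ∫⁻ z : ℝ × ℝ, ‖E i z.1 z.2 * E j (z.1 + w) (z.2 + w)‖₊
          ∂(volume.prod volume))
        = ∫⁻ w, ∫⁻ s, ∫⁻ t, (‖E i s t * E j (s + w) (t + w)‖₊ : ℝ≥0∞) :=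
          lintegral_congr hin
      _ = ∫⁻ s, ∫⁻ t, ∫⁻ w, (‖E i s t * E j (s + w) (t + w)‖₊ : ℝ≥0∞) :=
          lintegral_swap3 (fun w s t => (‖E i s t * E j (s + w) (t + w)‖₊ : ℝ≥0∞))
            hFm.enorm
      _ ≤ ∫⁻ s, ∫⁻ t, eB i s t * C j := by
          refine lintegral_mono fun s => lintegral_mono fun t => ?_
          calc (∫⁻ w, (‖E i s t * E j (s + w) (t + w)‖₊ : ℝ≥0∞))
              = ∫⁻ w, (‖E i s t‖₊ : ℝ≥0∞) * (‖E j (s + w) (t + w)‖₊ : ℝ≥0∞) := by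
                simp_rw [nnnorm_mul, ENNReal.coe_mul]
            _ = (‖E i s t‖₊ : ℝ≥0∞) * ∫⁻ w, (‖E j (s + w) (t + w)‖₊ : ℝ≥0∞) :=
                lintegral_const_mul _ (((hEm j).comp ((measurable_const.add measurable_id).prodMk
                  (measurable_const.add measurable_id))).enorm)
            _ ≤ (‖E i s t‖₊ : ℝ≥0∞) * C j := mul_le_mul_right (hEshiftC s t) _
            _ ≤ eB i s t * C j := mul_le_mul_left (hEbnd i s t) _
      _ = (∫⁻ s, ∫⁻ t, eB i s t) * C j := by
          have h2 : ∀ s : ℝ, (∫⁻ t, eB i s t * C j) = (∫⁻ t, eB i s t) * C j :=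
            fun s => lintegral_mul_const' _ _ (hCfin j).ne
          rw [lintegral_congr h2, lintegral_mul_const' _ _ (hCfin j).ne]
      _ < ⊤ := ENNReal.mul_lt_top (heBL1 i) (hCfin j)
  have hIntW : Integrable W volume := by
    refine hmaster.integral_prod_left.congr ?_
    filter_upwards [hmaster.prod_right_ae] with w hw
    rw [hWdef w]
    exact integral_prod _ hw
  -- central chain : ∫ W over ℝ equals ∫ γ_j γ_i over ℝ
  have hcentral : (∫ w, W w) = ∫ s, γ j s * γ i s := by
    have hWz : (fun w => W w) =ᵐ[volume] fun w =>
        ∫ z : ℝ × ℝ, E i z.1 z.2 * E j (z.1 + w) (z.2 + w) ∂(volume.prod volume) := by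
      filter_upwards [hmaster.prod_right_ae] with w hw
      rw [hWdef w]
      exact (integral_prod _ hw).symm
    have hinner : ∀ z : ℝ × ℝ, (∫ w, E i z.1 z.2 * E j (z.1 + w) (z.2 + w))
        = E i z.1 z.2 * γ j (z.1 - z.2) := by
      intro z
      rw [integral_const_mul]
      congr 1
      rw [hγbar j (z.1 - z.2),
        ← integral_add_right_eq_self (fun w => E j (w + (z.1 - z.2)) w) z.2]
      congr 1; ext w
      rw [show w + z.2 + (z.1 - z.2) = z.1 + w by ring, show w + z.2 = z.2 + w by ring]
    have hG : Integrable (fun z : ℝ × ℝ => E i z.1 z.2 * γ j (z.1 - z.2))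
        (volume.prod volume) := by
      refine hmaster.swap.integral_prod_left.congr (Filter.Eventually.of_forall fun z => ?_)
      exact hinner z
    have hI3 : Integrable (fun q : ℝ × ℝ => E i (q.2 + q.1) q.1 * γ j q.2)
        (volume.prod volume) := by
      refine integrable_of_lintegral_lt volume volume _
        (((hEm i).comp ((measurable_snd.add measurable_fst).prodMk measurable_fst)).mul
          ((hγm j).comp measurable_snd)) ?_
      calc (∫⁻ t, ∫⁻ s, (‖E i (s + t) t * γ j s‖₊ : ℝ≥0∞))
          = ∫⁻ t, ∫⁻ s, (‖E i (s + t) t‖₊ : ℝ≥0∞) * (‖γ j s‖₊ : ℝ≥0∞) := by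
            simp_rw [nnnorm_mul, ENNReal.coe_mul]
        _ ≤ ∫⁻ t, ∫⁻ s, eB i (s + t) t * C j := by
            refine lintegral_mono fun t => lintegral_mono fun s => ?_
            exact mul_le_mul' (hEbnd i _ _) (hγbd j s)
        _ = (∫⁻ t, ∫⁻ s, eB i (s + t) t) * C j := by
            have h2 : ∀ t : ℝ, (∫⁻ s, eB i (s + t) t * C j)
                = (∫⁻ s, eB i (s + t) t) * C j :=
              fun t => lintegral_mul_const' _ _ (hCfin j).ne
            rw [lintegral_congr h2, lintegral_mul_const' _ _ (hCfin j).ne]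
        _ < ⊤ := by
            have he : ∀ t : ℝ, (fun s => eB i (s + t) t) = fun s =>
                ∑ c, ∑ p, (‖SigL p c‖₊ : ℝ≥0∞) *
                  ((‖g i p (s + t)‖₊ : ℝ≥0∞) * (‖g i c t‖₊ : ℝ≥0∞)) :=
              fun t => funext fun s => heBdef i _ _
            simp only [he]
            rw [lintegral2_sep_shift (fun p c => (‖SigL p c‖₊ : ℝ≥0∞))
              (fun p y => (‖g i p y‖₊ : ℝ≥0∞)) (fun p => (hgm i p).enorm)]
            refine ENNReal.mul_lt_top ?_ (hCfin j)
            exact ENNReal.sum_lt_top.mpr fun c _ => ENNReal.sum_lt_top.mpr fun p _ =>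
              ENNReal.mul_lt_top ENNReal.coe_lt_top
                (ENNReal.mul_lt_top (hL1 i p) (hL1 i c))
    have h5 : ∀ t : ℝ, (∫ s, E i s t * γ j (s - t)) = ∫ s, E i (s + t) t * γ j s := by
      intro t
      rw [← integral_add_right_eq_self (fun s => E i s t * γ j (s - t)) t]
      congr 1; ext s; rw [show s + t - t = s by ring]
    calc (∫ w, W w)
        = ∫ w, ∫ z : ℝ × ℝ, E i z.1 z.2 * E j (z.1 + w) (z.2 + w)
            ∂(volume.prod volume) := integral_congr_ae hWz
      _ = ∫ z : ℝ × ℝ, ∫ w, E i z.1 z.2 * E j (z.1 + w) (z.2 + w)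
            ∂volume ∂(volume.prod volume) := integral_integral_swap hmaster
      _ = ∫ z : ℝ × ℝ, E i z.1 z.2 * γ j (z.1 - z.2) ∂(volume.prod volume) :=
          integral_congr_ae (Filter.Eventually.of_forall hinner)
      _ = ∫ s, ∫ t, E i s t * γ j (s - t) := integral_prod _ hG
      _ = ∫ t, ∫ s, E i s t * γ j (s - t) := integral_integral_swap hG
      _ = ∫ t, ∫ s, E i (s + t) t * γ j s :=
          integral_congr_ae (Filter.Eventually.of_forall h5)
      _ = ∫ s, ∫ t, E i (s + t) t * γ j s := integral_integral_swap hI3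
      _ = ∫ s, γ j s * γ i s := by
          refine integral_congr_ae (Filter.Eventually.of_forall fun s => ?_)
          show (∫ t, E i (s + t) t * γ j s) = γ j s * γ i s
          rw [integral_mul_const]
          have h6 : (∫ t, E i (s + t) t) = γ i s := by
            rw [hγbar i s]
            congr 1; ext t; rw [show s + t = t + s by ring]
          rw [h6, mul_comm]
  have hPint : Integrable (fun s => γ j s * γ i s) volume := by
    have hγL1 : (∫⁻ s, (‖γ i s‖₊ : ℝ≥0∞)) < ⊤ := by
      have hb : (∫⁻ s, ∫⁻ w, eB i (w + s) w) < ⊤ := by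
        have he : ∀ s : ℝ, (fun w => eB i (w + s) w) = fun w =>
            ∑ c, ∑ p, (‖SigL p c‖₊ : ℝ≥0∞) *
              ((‖g i p (w + s)‖₊ : ℝ≥0∞) * (‖g i c w‖₊ : ℝ≥0∞)) :=
          fun s => funext fun w => heBdef i _ _
        simp only [he]
        rw [lintegral2_sep_shift' (fun p c => (‖SigL p c‖₊ : ℝ≥0∞))
          (fun p y => (‖g i p y‖₊ : ℝ≥0∞)) (fun p => (hgm i p).enorm)]
        exact ENNReal.sum_lt_top.mpr fun c _ => ENNReal.sum_lt_top.mpr fun p _ =>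
          ENNReal.mul_lt_top ENNReal.coe_lt_top
            (ENNReal.mul_lt_top (hL1 i p) (hL1 i c))
      refine lt_of_le_of_lt (lintegral_mono fun s => ?_) hb
      rw [hγbar i s]
      exact le_trans (enorm_integral_le_lintegral_enorm _)
        (lintegral_mono fun w => hEbnd i _ _)
    refine ⟨((hγm j).mul (hγm i)).aestronglyMeasurable, ?_⟩
    rw [HasFiniteIntegral]
    calc (∫⁻ s, (‖γ j s * γ i s‖₊ : ℝ≥0∞))
        ≤ ∫⁻ s, C j * (‖γ i s‖₊ : ℝ≥0∞) := lintegral_mono fun s => by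
          rw [nnnorm_mul, ENNReal.coe_mul]
          exact mul_le_mul_left (hγbd j s) _
      _ = C j * ∫⁻ s, (‖γ i s‖₊ : ℝ≥0∞) := lintegral_const_mul' _ _ (hCfin j).ne
      _ < ⊤ := ENNReal.mul_lt_top (hCfin j) hγL1
  -- final assembly
  have hintegrand : ∀ u : ℝ,
      (SigYstar (u - h) * ((SigL ⊗ₖ SigL) : Matrix (Fin m × Fin m) (Fin m × Fin m) ℝ)
        * (SigYstar (u - h))ᵀ) (j, i) (j, i)
      + (SigY (u + h) * ((SigL ⊗ₖ SigL) : Matrix (Fin m × Fin m) (Fin m × Fin m) ℝ)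
        * (SigY (u + h))ᵀ) (j, i) (j, i) = W (h - u) + W (u + h) := by
    intro u
    rw [hstar (u - h), hYent (u + h), hVW (u - h), show -(u - h) = h - u by ring]
  have hW2 : Integrable (fun u => W (u + h)) volume := hIntW.comp_add_right h
  have hW1 : Integrable (fun u => W (h - u)) volume := by
    refine hW2.comp_neg.congr (Filter.Eventually.of_forall fun u => ?_)
    show W (-u + h) = W (h - u)
    rw [show -u + h = h - u by ring]
  have hpiece1 : (∫ u in Ioi (0:ℝ), W (h - u)) = ∫ x in Iic h, W x := by
    have e1 : (fun u : ℝ => W (h - u)) = fun u => W (-(u + -h)) :=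
      funext fun u => by rw [show -(u + -h) = h - u by ring]
    calc (∫ u in Ioi (0:ℝ), W (h - u))
        = ∫ u in Ioi (0:ℝ), W (-(u + -h)) := by rw [e1]
      _ = ∫ x in Ioi ((0:ℝ) + -h), W (-x) :=
          integral_Ioi_comp_add_right (fun x => W (-x)) 0 (-h)
      _ = ∫ x in Iic h, W x := by
          rw [show (0:ℝ) + -h = -h by ring, integral_comp_neg_Ioi, neg_neg]
  have hpiece2 : (∫ u in Ioi (0:ℝ), W (u + h)) = ∫ x in Ioi h, W x := by
    rw [integral_Ioi_comp_add_right W 0 h, zero_add]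
  have hsplit : (∫ s, γ j s * γ i s) = 2 * ∫ s in Ioi (0:ℝ), γ j s * γ i s := by
    have h1 : (∫ s, γ j s * γ i s)
        = (∫ s in Iic (0:ℝ), γ j s * γ i s) + ∫ s in Ioi (0:ℝ), γ j s * γ i s := by
      rw [← setIntegral_union (Iic_disjoint_Ioi le_rfl) measurableSet_Ioi
        hPint.integrableOn hPint.integrableOn, Iic_union_Ioi, Measure.restrict_univ]
    have h2 : (∫ s in Iic (0:ℝ), γ j s * γ i s) = ∫ s in Ioi (0:ℝ), γ j s * γ i s := by
      have h3 : (∫ s in Iic (0:ℝ), γ j s * γ i s)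
          = ∫ s in Iic (0:ℝ), γ j (-s) * γ i (-s) :=
        setIntegral_congr_fun measurableSet_Iic fun s _ => by
          show γ j s * γ i s = γ j (-s) * γ i (-s)
          rw [hγeven j s, hγeven i s]
      rw [h3]
      have h4 := integral_comp_neg_Iic (0:ℝ) (fun s => γ j s * γ i s)
      rw [h4, neg_zero]
    rw [h1, h2]; ring
  calc ∫ u in Ioi (0:ℝ),
        ((SigYstar (u - h) * ((SigL ⊗ₖ SigL) : Matrix (Fin m × Fin m) (Fin m × Fin m) ℝ)
            * (SigYstar (u - h))ᵀ) (j, i) (j, i)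
          + (SigY (u + h) * ((SigL ⊗ₖ SigL) : Matrix (Fin m × Fin m) (Fin m × Fin m) ℝ)
            * (SigY (u + h))ᵀ) (j, i) (j, i))
      = ∫ u in Ioi (0:ℝ), (W (h - u) + W (u + h)) :=
        setIntegral_congr_fun measurableSet_Ioi fun u _ => hintegrand u
    _ = (∫ u in Ioi (0:ℝ), W (h - u)) + ∫ u in Ioi (0:ℝ), W (u + h) :=
        integral_add hW1.integrableOn hW2.integrableOn
    _ = (∫ x in Iic h, W x) + ∫ x in Ioi h, W x := by rw [hpiece1, hpiece2]
    _ = ∫ x, W x := by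
        rw [← setIntegral_union (Iic_disjoint_Ioi le_rfl) measurableSet_Ioi
          hIntW.integrableOn hIntW.integrableOn, Iic_union_Ioi, Measure.restrict_univ]
    _ = ∫ s, γ j s * γ i s := hcentral
    _ = 2 * ∫ s in Ioi (0:ℝ), γ j s * γ i s := hsplit
end

section
/- Let Λ ∈ ℝ^{p×p} with all eigenvalues having positive real part, B ∈ ℝ^{p×m}, and L an ℝ^m-valued Lévy process with E(L_1) = 0 and E‖L_1‖⁴ < ∞. Define ξ_n = ∫₀^{Δ_n} e^{−Λ(Δ_n − s)} B dL_s with Δ_n ↓ 0. Then Δ_n^{-1} E‖ξ_n − B L_{Δ_n}‖⁴ → 0 as n → ∞. -/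
open MeasureTheory Matrix Filter

attribute [local instance] Matrix.linftyOpNormedRing Matrix.linftyOpNormedAlgebra

/-- FTC-type slope lemma: for continuous `g` and `Δ n → 0+`,
`(Δ n)⁻¹ ∫_{(0,Δ n]} g → g 0`. -/
lemma aux_slope {g : ℝ → ℝ} (hg : Continuous g) {Δ : ℕ → ℝ} (hpos : ∀ n, 0 < Δ n)
    (h0 : Tendsto Δ atTop (nhds 0)) :
    Tendsto (fun n => (Δ n)⁻¹ * ∫ t in Set.Ioc (0:ℝ) (Δ n), g t) atTop (nhds (g 0)) := by
  have hD : HasDerivAt (fun u => ∫ x in (0:ℝ)..u, g x) (g 0) 0 :=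
    intervalIntegral.integral_hasDerivAt_right (hg.intervalIntegrable _ _)
      (hg.stronglyMeasurableAtFilter _ _) hg.continuousAt
  have hS := hasDerivAt_iff_tendsto_slope.mp hD
  have hΔ : Tendsto Δ atTop (nhdsWithin 0 {(0:ℝ)}ᶜ) :=
    tendsto_nhdsWithin_of_tendsto_nhds_of_eventually_within _ h0
      (Eventually.of_forall fun n => (hpos n).ne')
  have := hS.comp hΔ
  refine this.congr fun n => ?_
  simp only [Function.comp_apply, slope_def_field, intervalIntegral.integral_same]
  rw [intervalIntegral.integral_of_le (hpos n).le]
  field_simp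
  simp only [sub_zero]

/-- change of variables `s ↦ Δ - s` on `(0, Δ]`. -/
lemma aux_subst (f : ℝ → ℝ) (hf : Continuous f) {Δ : ℝ} (hΔ : 0 < Δ) :
    (∫ s in Set.Ioc (0:ℝ) Δ, f (Δ - s)) = ∫ u in Set.Ioc (0:ℝ) Δ, f u := by
  rw [← intervalIntegral.integral_of_le hΔ.le, ← intervalIntegral.integral_of_le hΔ.le]
  simpa using intervalIntegral.integral_comp_sub_left f Δ

/-- Let `Λ ∈ ℝ^{p×p}` with all eigenvalues having positive real part, `B ∈ ℝ^{p×m}`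
and `L` an `ℝᵐ`-valued Lévy process with mean zero and finite fourth moment.  For
`ξ_n = ∫₀^{Δ_n} e^{−Λ(Δ_n−s)} B dL_s` (so that
`ξ_n − B L_{Δ_n} = ∫₀^{Δ_n} (e^{−Λ(Δ_n−s)} − I) B dL_s`, whose componentwise
fourth moments obey the standard bound
`E(∫₀^Δ g dL)⁴ ≤ C(∫₀^Δ g⁴ + (∫₀^Δ g²)²)` for deterministic integrands `g`),
one has `Δ_n⁻¹ E‖ξ_n − B L_{Δ_n}‖⁴ → 0` as `n → ∞`. -/
theorem fourth_moment_state_space_approx (p m : ℕ) {Ω : Type*} [MeasurableSpace Ω]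
    (P : Measure Ω) [IsProbabilityMeasure P]
    (Λ : Matrix (Fin p) (Fin p) ℝ)
    (hΛ : ∀ μ ∈ spectrum ℂ (Λ.map (Complex.ofReal)), 0 < μ.re)
    (B : Matrix (Fin p) (Fin m) ℝ)
    (L : ℝ → Ω → Fin m → ℝ) (hLmeas : ∀ t, Measurable (L t))
    (hL0 : ∀ i, ∫ ω, L 1 ω i ∂P = 0)
    (hL4 : Integrable (fun ω => ‖L 1 ω‖ ^ 4) P)
    (Δ : ℕ → ℝ) (hΔpos : ∀ n, 0 < Δ n) (hΔanti : Antitone Δ)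
    (hΔ0 : Tendsto Δ atTop (nhds 0))
    (ξ : ℕ → Ω → Fin p → ℝ) (hξmeas : ∀ n, Measurable (ξ n))
    (hξint : ∀ n, Integrable
      (fun ω => (∑ i, (ξ n ω i - B.mulVec (L (Δ n) ω) i) ^ 2) ^ 2) P)
    -- the fourth-moment bound for stochastic integrals of deterministic integrands,
    -- applied to `ξ_n − B L_{Δ_n} = ∫₀^{Δ_n} (e^{−Λ(Δ_n−s)} − I) B dL_s`
    (C : ℝ)
    (hbound : ∀ (n : ℕ) (i : Fin p),
      ∫ ω, (ξ n ω i - B.mulVec (L (Δ n) ω) i) ^ 4 ∂P ≤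
        C * ∑ k : Fin m,
          ((∫ s in Set.Ioc (0 : ℝ) (Δ n),
              (((NormedSpace.exp (-(Δ n - s) • Λ) - 1) * B : Matrix (Fin p) (Fin m) ℝ) i k) ^ 4)
            + (∫ s in Set.Ioc (0 : ℝ) (Δ n),
                (((NormedSpace.exp (-(Δ n - s) • Λ) - 1) * B : Matrix (Fin p) (Fin m) ℝ) i k) ^ 2) ^ 2)) :
    Tendsto
      (fun n => (Δ n)⁻¹ *
        ∫ ω, (∑ i, (ξ n ω i - B.mulVec (L (Δ n) ω) i) ^ 2) ^ 2 ∂P)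
      atTop (nhds 0) := by
  classical
  -- the deterministic integrand (as a function of the time-to-go `t`)
  set g : Fin p → Fin m → ℝ → ℝ := fun i k t =>
    (((NormedSpace.exp (-t • Λ) - 1) * B : Matrix (Fin p) (Fin m) ℝ)) i k with hg_def
  have hgcont : ∀ i k, Continuous (g i k) := by
    intro i k
    have hexp : Continuous (fun t : ℝ => NormedSpace.exp (-t • Λ)) :=
      NormedSpace.exp_continuous.comp ((continuous_neg.comp continuous_id).smul continuous_const)
    have : Continuous (fun t : ℝ => ∑ j, (NormedSpace.exp (-t • Λ) - 1) i j * B j k) := by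
      apply continuous_finset_sum
      intro j _
      exact (((continuous_apply j).comp ((continuous_apply i).comp
        (hexp.sub continuous_const))).mul continuous_const)
    refine this.congr fun t => ?_
    simp [hg_def, Matrix.mul_apply]
  have hg0 : ∀ i k, g i k 0 = 0 := by
    intro i k
    simp [hg_def, NormedSpace.exp_zero]
  -- the random vector
  set X : ℕ → Ω → Fin p → ℝ := fun n ω i => ξ n ω i - B.mulVec (L (Δ n) ω) i with hX_def
  have hXmeas : ∀ n i, Measurable (fun ω => X n ω i) := by
    intro n i
    apply Measurable.sub ((measurable_pi_apply i).comp (hξmeas n))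
    simp only [Matrix.mulVec, dotProduct]
    exact Finset.measurable_sum _ fun k _ =>
      ((measurable_pi_apply k).comp (hLmeas (Δ n))).const_mul _
  -- integrability of each fourth power
  have hX4int : ∀ n i, Integrable (fun ω => X n ω i ^ 4) P := by
    intro n i
    refine (hξint n).mono (((hXmeas n i).pow_const 4).aestronglyMeasurable)
      (Eventually.of_forall fun ω => ?_)
    rw [Real.norm_eq_abs, Real.norm_eq_abs, abs_of_nonneg (by positivity),
      abs_of_nonneg (by positivity)]
    calc X n ω i ^ 4 = (X n ω i ^ 2) ^ 2 := by ring
      _ ≤ (∑ j, X n ω j ^ 2) ^ 2 := by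
          apply pow_le_pow_left₀ (sq_nonneg _)
          exact Finset.single_le_sum (fun j _ => sq_nonneg (X n ω j)) (Finset.mem_univ i)
  -- upper bound sequence
  set U : ℕ → ℝ := fun n => (p : ℝ) * ∑ i, C * ∑ k,
      ((Δ n)⁻¹ * (∫ u in Set.Ioc (0:ℝ) (Δ n), g i k u ^ 4)
        + ((Δ n)⁻¹ * (∫ u in Set.Ioc (0:ℝ) (Δ n), g i k u ^ 2))
            * (((Δ n)⁻¹ * (∫ u in Set.Ioc (0:ℝ) (Δ n), g i k u ^ 2)) * Δ n)) with hU_def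
  have hUlim : Tendsto U atTop (nhds 0) := by
    have h0 : (0:ℝ) = (p : ℝ) * ∑ i : Fin p, C * ∑ k : Fin m, ((0:ℝ) + 0 * (0 * 0)) := by simp
    rw [h0]
    apply Tendsto.const_mul
    apply tendsto_finset_sum
    intro i _
    apply Tendsto.const_mul
    apply tendsto_finset_sum
    intro k _
    have h4 := aux_slope ((hgcont i k).pow 4) hΔpos hΔ0
    have h2 := aux_slope ((hgcont i k).pow 2) hΔpos hΔ0
    simp only [Pi.pow_apply] at h4 h2
    rw [hg0 i k] at h4 h2
    simp only [zero_pow, ne_eq, OfNat.ofNat_ne_zero, not_false_iff] at h4 h2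
    exact (h4.add (h2.mul (h2.mul hΔ0)))
  -- squeeze
  apply squeeze_zero (fun n => mul_nonneg (inv_nonneg.mpr (hΔpos n).le)
    (integral_nonneg fun ω => sq_nonneg _)) _ hUlim
  intro n
  have hptwise : ∀ ω, (∑ i, X n ω i ^ 2) ^ 2 ≤ (p : ℝ) * ∑ i, X n ω i ^ 4 := by
    intro ω
    have := sq_sum_le_card_mul_sum_sq (s := Finset.univ) (f := fun i => X n ω i ^ 2)
    simpa [← pow_mul] using this
  have hint2 : Integrable (fun ω => (p : ℝ) * ∑ i, X n ω i ^ 4) P :=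
    ((integrable_finset_sum _ fun i _ => hX4int n i).const_mul _)
  have step1 : (∫ ω, (∑ i, X n ω i ^ 2) ^ 2 ∂P) ≤ (p : ℝ) * ∑ i, ∫ ω, X n ω i ^ 4 ∂P := by
    calc (∫ ω, (∑ i, X n ω i ^ 2) ^ 2 ∂P) ≤ ∫ ω, (p : ℝ) * ∑ i, X n ω i ^ 4 ∂P :=
          integral_mono (hξint n) hint2 hptwise
      _ = (p : ℝ) * ∑ i, ∫ ω, X n ω i ^ 4 ∂P := by
          rw [integral_const_mul, integral_finset_sum _ fun i _ => hX4int n i]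
  have step2 : (p : ℝ) * ∑ i, (∫ ω, X n ω i ^ 4 ∂P) ≤ (p : ℝ) * ∑ i, C * ∑ k,
      ((∫ u in Set.Ioc (0:ℝ) (Δ n), g i k u ^ 4)
        + (∫ u in Set.Ioc (0:ℝ) (Δ n), g i k u ^ 2) ^ 2) := by
    apply mul_le_mul_of_nonneg_left _ (Nat.cast_nonneg p)
    apply Finset.sum_le_sum
    intro i _
    refine le_trans (hbound n i) (le_of_eq ?_)
    congr 1
    apply Finset.sum_congr rfl
    intro k _
    have e4 : (∫ s in Set.Ioc (0:ℝ) (Δ n), g i k (Δ n - s) ^ 4)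
        = ∫ u in Set.Ioc (0:ℝ) (Δ n), g i k u ^ 4 :=
      aux_subst (fun u => g i k u ^ 4) ((hgcont i k).pow 4) (hΔpos n)
    have e2 : (∫ s in Set.Ioc (0:ℝ) (Δ n), g i k (Δ n - s) ^ 2)
        = ∫ u in Set.Ioc (0:ℝ) (Δ n), g i k u ^ 2 :=
      aux_subst (fun u => g i k u ^ 2) ((hgcont i k).pow 2) (hΔpos n)
    simp only [hg_def] at e4 e2
    rw [← e4, ← e2]
  have hne : (Δ n) ≠ 0 := (hΔpos n).ne'
  have hW : ∀ (d : ℝ) (T : Fin p → Fin m → ℝ),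
      d * ((p:ℝ) * ∑ i, C * ∑ k, T i k) = (p:ℝ) * ∑ i, C * ∑ k, d * T i k := by
    intro d T
    simp only [Finset.mul_sum]
    exact Finset.sum_congr rfl fun i _ => Finset.sum_congr rfl fun k _ => by ring
  have hbig : (Δ n)⁻¹ * ∫ ω, (∑ i, X n ω i ^ 2) ^ 2 ∂P ≤ U n := by
    have h := mul_le_mul_of_nonneg_left (le_trans step1 step2) (inv_nonneg.mpr (hΔpos n).le)
    refine le_trans h (le_of_eq ?_)
    rw [hW, hU_def]
    refine congrArg _ (Finset.sum_congr rfl fun i _ => congrArg _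
      (Finset.sum_congr rfl fun k _ => ?_))
    field_simp
  exact hbig
end
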